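/- arXiv:2201.00481 — 11 statements merged into one kernel-verified Lean document; each statement's English description precedes it below -/
import Mathlib

section
/- Let α ∈ [0,1), λ > 0, p > 0, and let Y be a nonnegative random variable with cumulative distribution function F_Y. Let R : [0,∞) → [0,∞) be a Borel-measurable function, and suppose J > 0 satisfies λ ∫₀^∞ e^{J R(y)} dF_Y(y) = λ + J p. Define ψ₀ : ℝ × [0,∞) → ℝ by ψ₀(x,m) = 1 if x < αm and ψ₀(x,m) = 0 otherwise, and recursively define ψ_k(x,m) = ∫₀^∞ ∫₀^∞ ψ_{k−1}(x + p t − R(y), m) dF_Y(y) · λ e^{−λt} dt for k ≥ 1. Then for every k ≥ 0 and every (x,m) with m ≥ 0 and αm ≤ x, one has ψ_k(x,m) ≤ e^{−J(x − αm)}. -/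
open MeasureTheory Real Filter Set

lemma integral_exp_neg_mul_Ioi_zero {c : ℝ} (hc : 0 < c) :
    (∫ t in Ioi (0 : ℝ), Real.exp (-(c * t))) = 1 / c := by
  have := integral_comp_mul_left_Ioi (fun x => Real.exp (-x)) 0 hc
  simp only [mul_zero, integral_exp_neg_Ioi_zero, smul_eq_mul, mul_one] at this
  rw [this, one_div]

/-- Exponential bound for the probability of drawdown at or before the `k`-th claim in the
Cramér–Lundberg model: if `J > 0` satisfies `λ E[e^{J R(Y)}] = λ + J p`, then the recursively
defined functions `ψ_k` satisfy `ψ_k(x,m) ≤ e^{−J(x − αm)}` on the region `0 ≤ m`, `αm ≤ x`. -/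
theorem psi_k_exponential_bound
    (α lam p : ℝ) (hα0 : 0 ≤ α) (hα1 : α < 1) (hlam : 0 < lam) (hp : 0 < p)
    (ν : Measure ℝ) [IsProbabilityMeasure ν] (hν : ν (Set.Iio 0) = 0)
    (R : ℝ → ℝ) (hRmeas : Measurable R) (hRnonneg : ∀ y, 0 ≤ R y)
    (J : ℝ) (hJ : 0 < J)
    (hJeq : lam * ∫ y, Real.exp (J * R y) ∂ν = lam + J * p)
    (ψ : ℕ → ℝ → ℝ → ℝ)
    (hψ0 : ∀ x m : ℝ, ψ 0 x m = if x < α * m then 1 else 0)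
    (hψrec : ∀ k : ℕ, ∀ x m : ℝ, ψ (k + 1) x m
        = ∫ t in Set.Ioi (0 : ℝ),
            (∫ y, ψ k (x + p * t - R y) m ∂ν) * (lam * Real.exp (-lam * t))) :
    ∀ k : ℕ, ∀ x m : ℝ, 0 ≤ m → α * m ≤ x →
      ψ k x m ≤ Real.exp (-(J * (x - α * m))) := by
  -- Integrability of the exponential moment
  have hEYint : Integrable (fun y => Real.exp (J * R y)) ν := by
    by_contra h
    rw [integral_undef h, mul_zero] at hJeq
    nlinarith
  set EY : ℝ := ∫ y, Real.exp (J * R y) ∂ν with hEYdef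
  have hEY : EY = (lam + J * p) / lam := by
    field_simp
    linarith [hJeq]
  -- nonnegativity of ψ_k
  have hnonneg : ∀ k x m, 0 ≤ ψ k x m := by
    intro k
    induction k with
    | zero =>
      intro x m
      rw [hψ0]
      split <;> norm_num
    | succ k ih =>
      intro x m
      rw [hψrec]
      apply integral_nonneg
      intro t
      exact mul_nonneg (integral_nonneg fun y => ih _ _)
        (mul_nonneg hlam.le (Real.exp_nonneg _))
  -- strengthened bound: holds for all x (without `α m ≤ x`)
  have main : ∀ k : ℕ, ∀ x m : ℝ, ψ k x m ≤ Real.exp (-(J * (x - α * m))) := by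
    intro k
    induction k with
    | zero =>
      intro x m
      rw [hψ0]
      split
      · rename_i h
        rw [show (1 : ℝ) = Real.exp 0 by simp]
        apply Real.exp_le_exp.mpr
        nlinarith
      · positivity
    | succ k ih =>
      intro x m
      rw [hψrec]
      -- bound the inner integral for each t
      have inner : ∀ t : ℝ, (∫ y, ψ k (x + p * t - R y) m ∂ν)
          ≤ Real.exp (-(J * (x + p * t - α * m))) * EY := by
        intro t
        have : (∫ y, ψ k (x + p * t - R y) m ∂ν)
            ≤ ∫ y, Real.exp (-(J * (x + p * t - α * m))) * Real.exp (J * R y) ∂ν := by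
          apply integral_mono_of_nonneg
          · exact Filter.Eventually.of_forall fun y => hnonneg _ _ _
          · exact hEYint.const_mul _
          · refine Filter.Eventually.of_forall fun y => ?_
            calc ψ k (x + p * t - R y) m
                ≤ Real.exp (-(J * (x + p * t - R y - α * m))) := ih _ _
              _ = Real.exp (-(J * (x + p * t - α * m))) * Real.exp (J * R y) := by
                  rw [← Real.exp_add]; ring_nf
        rwa [integral_const_mul] at this
      -- bound the outer integral
      have houter : (∫ t in Set.Ioi (0 : ℝ),
            (∫ y, ψ k (x + p * t - R y) m ∂ν) * (lam * Real.exp (-lam * t)))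
          ≤ ∫ t in Set.Ioi (0 : ℝ),
            (Real.exp (-(J * (x - α * m))) * EY * lam) * Real.exp (-((J * p + lam) * t)) := by
        apply integral_mono_of_nonneg
        · refine Filter.Eventually.of_forall fun t => ?_
          exact mul_nonneg (integral_nonneg fun y => hnonneg _ _ _)
            (mul_nonneg hlam.le (Real.exp_nonneg _))
        · have := (exp_neg_integrableOn_Ioi (0:ℝ)
            (by positivity : (0:ℝ) < J * p + lam)).const_mul
            (Real.exp (-(J * (x - α * m))) * EY * lam)
          convert this using 2 with t
          ring_nf
        · refine Filter.Eventually.of_forall fun t => ?_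
          calc (∫ y, ψ k (x + p * t - R y) m ∂ν) * (lam * Real.exp (-lam * t))
              ≤ (Real.exp (-(J * (x + p * t - α * m))) * EY) * (lam * Real.exp (-lam * t)) := by
                apply mul_le_mul_of_nonneg_right (inner t)
                exact mul_nonneg hlam.le (Real.exp_nonneg _)
            _ = (Real.exp (-(J * (x - α * m))) * EY * lam) * Real.exp (-((J * p + lam) * t)) := by
                rw [show -(J * (x + p * t - α * m))
                      = -(J * (x - α * m)) + -(J * p * t) by ring, Real.exp_add,
                  show -((J * p + lam) * t) = -(J * p * t) + -lam * t by ring, Real.exp_add]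
                ring
      refine houter.trans_eq ?_
      rw [integral_const_mul, integral_exp_neg_mul_Ioi_zero (by positivity), hEY]
      field_simp
      ring
  intro k x m _ _
  exact main k x m
end

section
/- Let Y be a nonnegative random variable with E[Y] > 0 and E[Y²] < ∞, with survival function S_Y(y) = P(Y > y), and let λ > 0, θ ≥ 0, η > 0, and c satisfy λE[Y] < c < (1+θ)λE[Y] + (η/2)λE[Y²]. Then there exists a unique ρ > 0 solving c − λE[Y] = λρ ∫₀^∞ min((θ + ηy)/(ρ + η), y) S_Y(y) dy. -/
open MeasureTheory Real Filter Set Topology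

set_option maxHeartbeats 2000000 in
/-- Proposition 3.2 (existence/uniqueness part): the maximum adjustment coefficient of the
diffusion approximation, namely the unique `ρ > 0` solving
`c − λE[Y] = λρ ∫₀^∞ min((θ + ηy)/(ρ + η), y) S_Y(y) dy`. -/
theorem diffusion_adjustment_coefficient_exists_unique
    {Ω : Type*} [MeasurableSpace Ω] (μ : Measure Ω) [IsProbabilityMeasure μ]
    (Y : Ω → ℝ) (hYmeas : Measurable Y) (hYnonneg : ∀ ω, 0 ≤ Y ω)
    (hEY : 0 < ∫ ω, Y ω ∂μ) (hY2 : Integrable (fun ω => (Y ω) ^ 2) μ)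
    (lam θ η c : ℝ) (hlam : 0 < lam) (hθ : 0 ≤ θ) (hη : 0 < η)
    (hc1 : lam * ∫ ω, Y ω ∂μ < c)
    (hc2 : c < (1 + θ) * lam * (∫ ω, Y ω ∂μ) + (η / 2) * lam * ∫ ω, (Y ω) ^ 2 ∂μ) :
    ∃! ρ : ℝ, 0 < ρ ∧
      c - lam * ∫ ω, Y ω ∂μ
        = lam * ρ * ∫ y in Set.Ioi (0 : ℝ),
            min ((θ + η * y) / (ρ + η)) y * (μ {ω | y < Y ω}).toReal := by
  -- basic objects
  set S : ℝ → ℝ := fun y => (μ {ω | y < Y ω}).toReal with hS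
  set EY : ℝ := ∫ ω, Y ω ∂μ with hEYdef
  set M2 : ℝ := ∫ ω, (Y ω) ^ 2 ∂μ with hM2def
  have hYnn_ae : 0 ≤ᵐ[μ] Y := Eventually.of_forall hYnonneg
  have hYint : Integrable Y μ := by
    have : Integrable (fun ω => 1 + (Y ω) ^ 2) μ := (integrable_const 1).add hY2
    refine this.mono hYmeas.aestronglyMeasurable (Eventually.of_forall fun ω => ?_)
    have h0 := hYnonneg ω
    rw [Real.norm_of_nonneg h0, Real.norm_of_nonneg (by positivity)]
    nlinarith [sq_nonneg (Y ω - 1)]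
  have hM2nn : 0 ≤ M2 := integral_nonneg fun ω => sq_nonneg _
  -- measurability / basic properties of S
  have hSanti : Antitone fun y => μ {ω | y < Y ω} :=
    fun a b hab => measure_mono fun ω h => lt_of_le_of_lt hab h
  have hSmeas : Measurable S := (Antitone.measurable hSanti).ennreal_toReal
  have hSnn : ∀ y, 0 ≤ S y := fun y => ENNReal.toReal_nonneg
  have hSmono : ∀ {a b : ℝ}, a ≤ b → S b ≤ S a := by
    intro a b hab
    exact ENNReal.toReal_mono (measure_ne_top _ _) (hSanti hab)
  -- layer cake: ∫_{Ioi 0} S = EY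
  have hmeas_ne_top : ∀ y : ℝ, μ {ω | y < Y ω} ≠ ⊤ := fun y => measure_ne_top _ _
  have layer1 : ∫ y in Set.Ioi (0 : ℝ), S y = EY :=
    (hYint.integral_eq_integral_meas_lt hYnn_ae).symm
  have hSlint : ∫⁻ y in Set.Ioi (0 : ℝ), ENNReal.ofReal (S y) =
      ∫⁻ ω, ENNReal.ofReal (Y ω) ∂μ := by
    rw [lintegral_eq_lintegral_meas_lt μ hYnn_ae hYmeas.aemeasurable]
    refine setLIntegral_congr_fun measurableSet_Ioi (fun y _ => ?_)
    exact ENNReal.ofReal_toReal (hmeas_ne_top y)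
  have hSint : IntegrableOn S (Set.Ioi (0 : ℝ)) := by
    refine ⟨hSmeas.aestronglyMeasurable, ?_⟩
    rw [hasFiniteIntegral_iff_ofReal (Eventually.of_forall fun y => hSnn y)]
    rw [hSlint]
    exact hYint.lintegral_lt_top
  -- layer cake with weight: ∫_{Ioi 0} y * S y = M2 / 2
  have key0 : ∫⁻ ω, ENNReal.ofReal (∫ t in (0:ℝ)..Y ω, t) ∂μ =
      ∫⁻ t in Set.Ioi (0:ℝ), μ {a | t < Y a} * ENNReal.ofReal t := by
    refine lintegral_comp_eq_lintegral_meas_lt_mul μ hYnn_ae hYmeas.aemeasurable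
      (fun t _ => Continuous.intervalIntegrable continuous_id 0 t) ?_
    filter_upwards [ae_restrict_mem measurableSet_Ioi] with t ht
    exact le_of_lt ht
  have lhs_eq : ∫⁻ ω, ENNReal.ofReal (∫ t in (0:ℝ)..Y ω, t) ∂μ =
      ∫⁻ ω, ENNReal.ofReal ((Y ω) ^ 2 / 2) ∂μ := by
    refine lintegral_congr fun ω => ?_
    rw [integral_id]
    norm_num
  have half_int : Integrable (fun ω => (Y ω) ^ 2 / 2) μ := hY2.div_const 2
  have hl2 : ∫⁻ y in Set.Ioi (0:ℝ), ENNReal.ofReal (y * S y) =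
      ∫⁻ ω, ENNReal.ofReal ((Y ω) ^ 2 / 2) ∂μ := by
    rw [← lhs_eq, key0]
    refine setLIntegral_congr_fun measurableSet_Ioi (fun y hy => ?_)
    have hy' : (0:ℝ) < y := hy
    rw [ENNReal.ofReal_mul hy'.le, ENNReal.ofReal_toReal (hmeas_ne_top y), mul_comm]
  have hl2fin : ∫⁻ y in Set.Ioi (0:ℝ), ENNReal.ofReal (y * S y) < ⊤ := by
    rw [hl2]; exact half_int.lintegral_lt_top
  have hySmeas : AEStronglyMeasurable (fun y => y * S y)
      (volume.restrict (Set.Ioi (0:ℝ))) :=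
    (measurable_id.mul hSmeas).aestronglyMeasurable
  have hySnn_ae : 0 ≤ᵐ[volume.restrict (Set.Ioi (0:ℝ))] fun y => y * S y := by
    filter_upwards [ae_restrict_mem measurableSet_Ioi] with y hy
    exact mul_nonneg (le_of_lt hy) (hSnn y)
  have hySint : IntegrableOn (fun y => y * S y) (Set.Ioi (0 : ℝ)) := by
    refine ⟨hySmeas, ?_⟩
    rw [hasFiniteIntegral_iff_ofReal hySnn_ae]
    exact hl2fin
  have layer2 : ∫ y in Set.Ioi (0 : ℝ), y * S y = M2 / 2 := by
    rw [integral_eq_lintegral_of_nonneg_ae hySnn_ae hySmeas, hl2,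
      ← integral_eq_lintegral_of_nonneg_ae
        (Eventually.of_forall fun ω => by positivity) half_int.aestronglyMeasurable]
    rw [integral_div]
  -- the bound function
  have hBint : IntegrableOn (fun y => (θ + η * y) * S y) (Set.Ioi (0 : ℝ)) := by
    have : (fun y => (θ + η * y) * S y) = fun y => θ * S y + η * (y * S y) := by
      funext y; ring
    rw [this]
    exact (hSint.const_mul θ).add (hySint.const_mul η)
  have hBval : ∫ y in Set.Ioi (0 : ℝ), (θ + η * y) * S y = θ * EY + η * (M2 / 2) := by
    have : (fun y => (θ + η * y) * S y) = fun y => θ * S y + η * (y * S y) := by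
      funext y; ring
    rw [this, integral_add (hSint.const_mul θ) (hySint.const_mul η),
      integral_const_mul, integral_const_mul, layer1, layer2]
  -- the key function
  set G : ℝ → ℝ := fun ρ => ∫ y in Set.Ioi (0 : ℝ), ρ * (min ((θ + η * y) / (ρ + η)) y * S y)
    with hGdef
  -- pointwise bounds
  have hmin_nn : ∀ ρ : ℝ, 0 < ρ → ∀ y ∈ Set.Ioi (0:ℝ),
      0 ≤ ρ * (min ((θ + η * y) / (ρ + η)) y * S y) := by
    intro ρ hρ y hy
    have hy' : (0:ℝ) < y := hy
    have : 0 ≤ min ((θ + η * y) / (ρ + η)) y := le_min (by positivity) hy'.le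
    positivity
  have hbound : ∀ ρ : ℝ, 0 < ρ → ∀ y ∈ Set.Ioi (0:ℝ),
      ρ * (min ((θ + η * y) / (ρ + η)) y * S y) ≤ (θ + η * y) * S y := by
    intro ρ hρ y hy
    have hy' : (0:ℝ) < y := hy
    have h1 : min ((θ + η * y) / (ρ + η)) y ≤ (θ + η * y) / (ρ + η) := min_le_left _ _
    have h2 : ρ * ((θ + η * y) / (ρ + η)) ≤ θ + η * y := by
      rw [mul_div_assoc', div_le_iff₀ (by linarith)]
      nlinarith [mul_nonneg (by positivity : (0:ℝ) ≤ θ + η * y) hη.le]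
    calc ρ * (min ((θ + η * y) / (ρ + η)) y * S y)
        ≤ ρ * ((θ + η * y) / (ρ + η)) * S y := by
          rw [← mul_assoc]
          exact mul_le_mul_of_nonneg_right (mul_le_mul_of_nonneg_left h1 hρ.le) (hSnn y)
      _ ≤ (θ + η * y) * S y := mul_le_mul_of_nonneg_right h2 (hSnn y)
  have hbound2 : ∀ ρ : ℝ, 0 < ρ → ∀ y ∈ Set.Ioi (0:ℝ),
      ρ * (min ((θ + η * y) / (ρ + η)) y * S y) ≤ ρ * (y * S y) := by
    intro ρ hρ y hy
    refine mul_le_mul_of_nonneg_left (mul_le_mul_of_nonneg_right (min_le_right _ _) (hSnn y)) hρ.le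
  -- integrability of integrand
  have hFmeas : ∀ ρ : ℝ, AEStronglyMeasurable
      (fun y => ρ * (min ((θ + η * y) / (ρ + η)) y * S y))
      (volume.restrict (Set.Ioi (0:ℝ))) := by
    intro ρ
    refine (Measurable.aestronglyMeasurable ?_)
    exact measurable_const.mul
      ((((measurable_const.add (measurable_id.const_mul η)).div measurable_const).min
        measurable_id).mul hSmeas)
  have hFint : ∀ ρ : ℝ, 0 < ρ → IntegrableOn
      (fun y => ρ * (min ((θ + η * y) / (ρ + η)) y * S y)) (Set.Ioi (0:ℝ)) := by
    intro ρ hρ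
    refine Integrable.mono hBint (hFmeas ρ) ?_
    rw [ae_restrict_iff' measurableSet_Ioi]
    refine Eventually.of_forall fun y hy => ?_
    rw [Real.norm_of_nonneg (hmin_nn ρ hρ y hy)]
    have hy' : (0:ℝ) < y := hy
    have : 0 ≤ (θ + η * y) * S y := mul_nonneg (by positivity) (hSnn y)
    rw [Real.norm_of_nonneg this]
    exact hbound ρ hρ y hy
  -- strict monotonicity
  obtain ⟨y₀, hy₀pos, hy₀S⟩ : ∃ y₀ : ℝ, 0 < y₀ ∧ 0 < S y₀ := by
    by_contra h
    push_neg at h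
    have hz : ∫ y in Set.Ioi (0:ℝ), S y = 0 := by
      rw [setIntegral_congr_fun measurableSet_Ioi
        (fun y hy => le_antisymm (h y hy) (hSnn y) : ∀ y ∈ Set.Ioi (0:ℝ), S y = (0:ℝ))]
      simp
    rw [layer1] at hz
    exact absurd hz (ne_of_gt hEY)
  have hptwise : ∀ ρ₁ ρ₂ : ℝ, 0 < ρ₁ → ρ₁ < ρ₂ → ∀ y : ℝ, 0 < y →
      ρ₁ * min ((θ + η * y) / (ρ₁ + η)) y < ρ₂ * min ((θ + η * y) / (ρ₂ + η)) y := by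
    intro ρ₁ ρ₂ hρ₁ h12 y hy
    have ha : (0:ℝ) < θ + η * y := by nlinarith
    rw [mul_min_of_nonneg _ _ hρ₁.le, mul_min_of_nonneg _ _ (by linarith : (0:ℝ) ≤ ρ₂)]
    refine min_lt_min ?_ (by nlinarith [mul_lt_mul_of_pos_right h12 hy])
    have e1 : ρ₁ * ((θ + η * y) / (ρ₁ + η)) = (θ + η * y) * (ρ₁ / (ρ₁ + η)) := by ring
    have e2 : ρ₂ * ((θ + η * y) / (ρ₂ + η)) = (θ + η * y) * (ρ₂ / (ρ₂ + η)) := by ring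
    rw [e1, e2]
    refine mul_lt_mul_of_pos_left ?_ ha
    rw [div_lt_div_iff₀ (by linarith) (by linarith)]
    nlinarith [mul_lt_mul_of_pos_right h12 hη]
  have hGmono : ∀ ρ₁ ρ₂ : ℝ, 0 < ρ₁ → ρ₁ < ρ₂ → G ρ₁ < G ρ₂ := by
    intro ρ₁ ρ₂ hρ₁ h12
    have hρ₂ : 0 < ρ₂ := lt_trans hρ₁ h12
    set d : ℝ → ℝ := fun y =>
      ρ₂ * (min ((θ + η * y) / (ρ₂ + η)) y * S y) -
        ρ₁ * (min ((θ + η * y) / (ρ₁ + η)) y * S y) with hd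
    have hdint : IntegrableOn d (Set.Ioi (0:ℝ)) := (hFint ρ₂ hρ₂).sub (hFint ρ₁ hρ₁)
    have hdnn : 0 ≤ᵐ[volume.restrict (Set.Ioi (0:ℝ))] d := by
      filter_upwards [ae_restrict_mem measurableSet_Ioi] with y hy
      have hy' : (0:ℝ) < y := hy
      have := hptwise ρ₁ ρ₂ hρ₁ h12 y hy'
      have hS := hSnn y
      simp only [Pi.zero_apply, hd]
      nlinarith [mul_le_mul_of_nonneg_right this.le hS,
        mul_assoc ρ₁ (min ((θ + η * y) / (ρ₁ + η)) y) (S y),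
        mul_assoc ρ₂ (min ((θ + η * y) / (ρ₂ + η)) y) (S y)]
    have hpos : 0 < ∫ y in Set.Ioi (0:ℝ), d y := by
      rw [setIntegral_pos_iff_support_of_nonneg_ae hdnn hdint]
      refine lt_of_lt_of_le (b := volume (Set.Ioc (0:ℝ) y₀)) ?_ (measure_mono ?_)
      · rw [Real.volume_Ioc]
        simp [hy₀pos]
      · intro y hy
        obtain ⟨hy1, hy2⟩ := hy
        have hy' : (0:ℝ) < y := hy1
        have hSy : 0 < S y := lt_of_lt_of_le hy₀S (hSmono hy2)
        have hlt := hptwise ρ₁ ρ₂ hρ₁ h12 y hy'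
        constructor
        · simp only [Function.mem_support, hd]
          intro hzero
          nlinarith [mul_lt_mul_of_pos_right hlt hSy]
        · exact hy'
    have := integral_sub (hFint ρ₂ hρ₂) (hFint ρ₁ hρ₁)
    rw [hGdef]
    simp only
    rw [← sub_pos, ← this]
    exact hpos
  -- continuity
  have hGcont : ∀ ρ₀ : ℝ, 0 < ρ₀ → ContinuousAt G ρ₀ := by
    intro ρ₀ hρ₀
    rw [hGdef]
    refine continuousAt_of_dominated (F := fun ρ y => ρ * (min ((θ + η * y) / (ρ + η)) y * S y))
      (bound := fun y => (θ + η * y) * S y) (Eventually.of_forall fun ρ => hFmeas ρ) ?_ hBint ?_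
    · filter_upwards [eventually_gt_nhds hρ₀] with ρ hρ
      rw [ae_restrict_iff' measurableSet_Ioi]
      refine Eventually.of_forall fun y hy => ?_
      rw [Real.norm_of_nonneg (hmin_nn ρ hρ y hy)]
      exact hbound ρ hρ y hy
    · refine Eventually.of_forall fun y => ?_
      have hne : ρ₀ + η ≠ 0 := by positivity
      exact continuousAt_id.mul
        (((continuousAt_const.div (continuousAt_id.add continuousAt_const) hne).min
          continuousAt_const).mul continuousAt_const)
  -- value at small ρ
  have hGsmall : ∀ ρ : ℝ, 0 < ρ → G ρ ≤ ρ * (M2 / 2) := by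
    intro ρ hρ
    calc G ρ ≤ ∫ y in Set.Ioi (0:ℝ), ρ * (y * S y) := by
          refine setIntegral_mono_on (hFint ρ hρ) (hySint.const_mul ρ) measurableSet_Ioi ?_
          exact fun y hy => hbound2 ρ hρ y hy
      _ = ρ * (M2 / 2) := by rw [integral_const_mul, layer2]
  -- limit at infinity
  have hGlim : Tendsto (fun n : ℕ => G n) atTop (𝓝 (θ * EY + η * (M2 / 2))) := by
    rw [← hBval, hGdef]
    refine tendsto_integral_of_dominated_convergence (bound := fun y => (θ + η * y) * S y)
      (fun n => hFmeas n) hBint ?_ ?_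
    · intro n
      rw [ae_restrict_iff' measurableSet_Ioi]
      refine Eventually.of_forall fun y hy => ?_
      have hy' : (0:ℝ) < y := hy
      rcases Nat.eq_zero_or_pos n with hn | hn
      · subst hn
        simp only [Nat.cast_zero, zero_mul, norm_zero]
        positivity
      · have hnpos : (0:ℝ) < n := by exact_mod_cast hn
        rw [Real.norm_of_nonneg (hmin_nn n hnpos y hy)]
        exact hbound n hnpos y hy
    · rw [ae_restrict_iff' measurableSet_Ioi]
      refine Eventually.of_forall fun y hy => ?_
      have hy' : (0:ℝ) < y := hy
      have ha : (0:ℝ) < θ + η * y := by nlinarith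
      -- key limit for the scalar part
      have t1 : Tendsto (fun n : ℕ => (n:ℝ) + η) atTop atTop :=
        tendsto_atTop_add_const_right atTop η tendsto_natCast_atTop_atTop
      have t2 : Tendsto (fun n : ℕ => η / ((n:ℝ) + η)) atTop (𝓝 0) :=
        Tendsto.div_atTop tendsto_const_nhds t1
      have t3 : Tendsto (fun n : ℕ => (θ + η * y) * (1 - η / ((n:ℝ) + η))) atTop
          (𝓝 (θ + η * y)) := by
        have h1 : Tendsto (fun n : ℕ => (1:ℝ) - η / ((n:ℝ) + η)) atTop (𝓝 (1 - 0)) :=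
          (tendsto_const_nhds (x := (1:ℝ))).sub t2
        have := h1.const_mul (θ + η * y)
        simpa using this
      have t4 : Tendsto (fun n : ℕ => (n:ℝ) * ((θ + η * y) / ((n:ℝ) + η))) atTop
          (𝓝 (θ + η * y)) := by
        refine t3.congr fun n => ?_
        have hne : (n:ℝ) + η ≠ 0 := by positivity
        field_simp
        ring
      have heq : ∀ᶠ n : ℕ in atTop,
          (n:ℝ) * (min ((θ + η * y) / ((n:ℝ) + η)) y * S y)
            = ((n:ℝ) * ((θ + η * y) / ((n:ℝ) + η))) * S y := by
        filter_upwards [tendsto_natCast_atTop_atTop.eventually_ge_atTop (θ / y)] with n hn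
        have hne : (0:ℝ) < (n:ℝ) + η := by positivity
        have hmin : min ((θ + η * y) / ((n:ℝ) + η)) y = (θ + η * y) / ((n:ℝ) + η) := by
          refine min_eq_left ?_
          rw [div_le_iff₀ hne]
          have : θ ≤ (n:ℝ) * y := by
            rw [div_le_iff₀ hy'] at hn
            linarith [hn]
          nlinarith
        rw [hmin]
        ring
      exact Tendsto.congr' (heq.mono fun n h => h.symm) (t4.mul_const (S y))
  -- now the main argument
  set T : ℝ := (c - lam * EY) / lam with hTdef
  have hT0 : 0 < T := div_pos (by linarith) hlam
  have hTlt : T < θ * EY + η * (M2 / 2) := by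
    rw [hTdef, div_lt_iff₀ hlam]
    nlinarith
  -- rewrite goal in terms of G
  have hGI : ∀ ρ : ℝ, G ρ = ρ * ∫ y in Set.Ioi (0 : ℝ),
      min ((θ + η * y) / (ρ + η)) y * S y := by
    intro ρ
    rw [hGdef]
    exact integral_const_mul ρ _
  have hGrw : ∀ ρ : ℝ,
      (c - lam * EY = lam * ρ * ∫ y in Set.Ioi (0 : ℝ),
        min ((θ + η * y) / (ρ + η)) y * S y) ↔ G ρ = T := by
    intro ρ
    have key : lam * G ρ = lam * ρ * ∫ y in Set.Ioi (0 : ℝ),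
        min ((θ + η * y) / (ρ + η)) y * S y := by rw [hGI ρ]; ring
    rw [← key, hTdef, eq_div_iff hlam.ne']
    constructor <;> intro h <;> linarith
  -- existence via IVT
  obtain ⟨ρ₀, hρ₀pos, hρ₀⟩ : ∃ ρ : ℝ, 0 < ρ ∧ G ρ = T := by
    -- small value
    set ρ₁ : ℝ := T / (M2 / 2 + 1) with hρ₁def
    have hρ₁pos : 0 < ρ₁ := div_pos hT0 (by linarith)
    have hsmall : G ρ₁ < T := by
      refine lt_of_le_of_lt (hGsmall ρ₁ hρ₁pos) ?_
      rw [hρ₁def, div_mul_eq_mul_div, div_lt_iff₀ (by linarith)]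
      nlinarith
    -- large value
    obtain ⟨n, hn⟩ : ∃ n : ℕ, T < G n ∧ ρ₁ < n := by
      have h1 : ∀ᶠ n : ℕ in atTop, T < G n :=
        hGlim.eventually (eventually_gt_nhds hTlt)
      have h2 : ∀ᶠ n : ℕ in atTop, ρ₁ < n := by
        filter_upwards [eventually_gt_atTop ⌈ρ₁⌉₊] with n hn
        calc ρ₁ ≤ (⌈ρ₁⌉₊ : ℝ) := Nat.le_ceil _
          _ < n := by exact_mod_cast hn
      exact ((h1.and h2).exists)
    have hcont : ContinuousOn G (Set.Icc ρ₁ n) := by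
      intro x hx
      exact (hGcont x (lt_of_lt_of_le hρ₁pos hx.1)).continuousWithinAt
    have hmem : T ∈ Set.Icc (G ρ₁) (G n) := ⟨hsmall.le, hn.1.le⟩
    obtain ⟨ρ, hρmem, hρval⟩ := intermediate_value_Icc hn.2.le hcont hmem
    exact ⟨ρ, lt_of_lt_of_le hρ₁pos hρmem.1, hρval⟩
  refine ⟨ρ₀, ⟨hρ₀pos, (hGrw ρ₀).mpr hρ₀⟩, ?_⟩
  rintro ρ ⟨hρpos, hρeq⟩
  have hρG : G ρ = T := (hGrw ρ).mp hρeq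
  by_contra hne
  rcases lt_or_gt_of_ne hne with h | h
  · have := hGmono ρ ρ₀ hρpos h
    rw [hρG, hρ₀] at this; exact lt_irrefl _ this
  · have := hGmono ρ₀ ρ hρ₀pos h
    rw [hρG, hρ₀] at this; exact lt_irrefl _ this
end

section
/- Let Y be a nonnegative random variable with E[Y] > 0 and E[Y²] < ∞, with survival function S_Y(y) = P(Y > y), and let λ > 0, θ ≥ 0, η > 0. Define Φ(ρ) = λρ ∫₀^∞ min((θ + ηy)/(ρ + η), y) S_Y(y) dy for ρ > 0. Then Φ is strictly increasing on (0, ∞), lim_{ρ→0⁺} Φ(ρ) = 0, and lim_{ρ→∞} Φ(ρ) = λ(θE[Y] + (η/2)E[Y²]). -/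
open MeasureTheory Real Filter Set
open scoped ENNReal
open intervalIntegral in
lemma my_integral_id (a b : ℝ) : ∫ x in a..b, x = (b ^ 2 - a ^ 2) / 2 := integral_id

lemma aux_S_meas {Ω : Type*} [MeasurableSpace Ω] (μ : Measure Ω) (Y : Ω → ℝ) :
    Measurable (fun y : ℝ => (μ {ω | y < Y ω}).toReal) := by
  apply Measurable.ennreal_toReal
  exact Antitone.measurable (fun s t hst => measure_mono (fun ω h => lt_of_le_of_lt hst h))

lemma aux_layer1 {Ω : Type*} [MeasurableSpace Ω] (μ : Measure Ω) [IsProbabilityMeasure μ]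
    (Y : Ω → ℝ) (hYnonneg : ∀ ω, 0 ≤ Y ω) (hYint : Integrable Y μ) :
    IntegrableOn (fun y : ℝ => (μ {ω | y < Y ω}).toReal) (Ioi 0) volume ∧
    ∫ y in Ioi (0:ℝ), (μ {ω | y < Y ω}).toReal = ∫ ω, Y ω ∂μ := by
  constructor
  · refine ⟨(aux_S_meas μ Y).aestronglyMeasurable.restrict, ?_⟩
    rw [hasFiniteIntegral_iff_ofReal (ae_of_all _ (fun y => ENNReal.toReal_nonneg))]
    have h1 : ∀ y : ℝ, ENNReal.ofReal ((μ {ω | y < Y ω}).toReal) = μ {ω | y < Y ω} :=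
      fun y => ENNReal.ofReal_toReal (measure_ne_top μ _)
    simp_rw [h1]
    rw [← lintegral_eq_lintegral_meas_lt μ (ae_of_all _ hYnonneg) hYint.aemeasurable]
    exact hYint.lintegral_lt_top
  · exact (hYint.integral_eq_integral_meas_lt (ae_of_all _ hYnonneg)).symm

lemma aux_layer2 {Ω : Type*} [MeasurableSpace Ω] (μ : Measure Ω) [IsProbabilityMeasure μ]
    (Y : Ω → ℝ) (hYmeas : Measurable Y) (hYnonneg : ∀ ω, 0 ≤ Y ω)
    (hY2 : Integrable (fun ω => (Y ω) ^ 2) μ) :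
    IntegrableOn (fun y : ℝ => y * (μ {ω | y < Y ω}).toReal) (Ioi 0) volume ∧
    ∫ y in Ioi (0:ℝ), y * (μ {ω | y < Y ω}).toReal = (∫ ω, (Y ω) ^ 2 ∂μ) / 2 := by
  have key := lintegral_comp_eq_lintegral_meas_lt_mul μ (f := Y) (g := fun t => t)
    (ae_of_all _ hYnonneg) hYmeas.aemeasurable
    (fun t _ => (continuous_id.intervalIntegrable 0 t))
    ((ae_restrict_iff' measurableSet_Ioi).2 (ae_of_all _ (fun t ht => le_of_lt ht)))
  have hkey2 : ∀ ω, ENNReal.ofReal (∫ t in (0:ℝ)..Y ω, t) = ENNReal.ofReal (Y ω ^ 2 / 2) := by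
    intro ω
    rw [my_integral_id]
    norm_num
  simp_rw [hkey2] at key
  -- key : ∫⁻ ω, ENNReal.ofReal (Y ω ^ 2 / 2) ∂μ = ∫⁻ t in Ioi 0, μ {a | t < Y a} * ENNReal.ofReal t
  have h2int : Integrable (fun ω => Y ω ^ 2 / 2) μ := hY2.div_const 2
  have hfin : (∫⁻ t in Ioi (0:ℝ), μ {a | t < Y a} * ENNReal.ofReal t) < ⊤ := by
    rw [← key]; exact h2int.lintegral_lt_top
  have hnn : 0 ≤ᵐ[volume.restrict (Ioi (0:ℝ))] fun y => y * (μ {ω | y < Y ω}).toReal := by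
    refine (ae_restrict_iff' measurableSet_Ioi).2 (ae_of_all _ (fun y hy => ?_))
    exact mul_nonneg (le_of_lt hy) ENNReal.toReal_nonneg
  have hmeas : Measurable (fun y : ℝ => y * (μ {ω | y < Y ω}).toReal) :=
    measurable_id.mul (aux_S_meas μ Y)
  have hof : ∀ᵐ y ∂(volume.restrict (Ioi (0:ℝ))),
      ENNReal.ofReal (y * (μ {ω | y < Y ω}).toReal) = μ {a | y < Y a} * ENNReal.ofReal y := by
    refine (ae_restrict_iff' measurableSet_Ioi).2 (ae_of_all _ (fun y hy => ?_))
    rw [ENNReal.ofReal_mul (le_of_lt hy), ENNReal.ofReal_toReal (measure_ne_top μ _), mul_comm]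
  have hlin : (∫⁻ y in Ioi (0:ℝ), ENNReal.ofReal (y * (μ {ω | y < Y ω}).toReal))
      = ∫⁻ t in Ioi (0:ℝ), μ {a | t < Y a} * ENNReal.ofReal t := lintegral_congr_ae hof
  constructor
  · refine ⟨hmeas.aestronglyMeasurable.restrict, ?_⟩
    rw [hasFiniteIntegral_iff_ofReal hnn, hlin]
    exact hfin
  · rw [integral_eq_lintegral_of_nonneg_ae hnn hmeas.aestronglyMeasurable.restrict, hlin, ← key,
      ← integral_eq_lintegral_of_nonneg_ae (ae_of_all _ (fun ω => by positivity))
        (hYmeas.pow_const 2 |>.div_const 2).aestronglyMeasurable, integral_div]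

/-- Monotonicity and limits of
`Φ(ρ) = λρ ∫₀^∞ min((θ + ηy)/(ρ + η), y) S_Y(y) dy`:
`Φ` is strictly increasing on `(0,∞)`, `Φ(ρ) → 0` as `ρ → 0⁺`, and
`Φ(ρ) → λ(θE[Y] + (η/2)E[Y²])` as `ρ → ∞`. -/
theorem diffusion_adjustment_Phi_monotone_and_limits
    {Ω : Type*} [MeasurableSpace Ω] (μ : Measure Ω) [IsProbabilityMeasure μ]
    (Y : Ω → ℝ) (hYmeas : Measurable Y) (hYnonneg : ∀ ω, 0 ≤ Y ω)
    (hEY : 0 < ∫ ω, Y ω ∂μ) (hY2 : Integrable (fun ω => (Y ω) ^ 2) μ)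
    (lam θ η : ℝ) (hlam : 0 < lam) (hθ : 0 ≤ θ) (hη : 0 < η)
    (Φ : ℝ → ℝ)
    (hΦ : ∀ ρ : ℝ, 0 < ρ → Φ ρ
        = lam * ρ * ∫ y in Set.Ioi (0 : ℝ),
            min ((θ + η * y) / (ρ + η)) y * (μ {ω | y < Y ω}).toReal) :
    StrictMonoOn Φ (Set.Ioi 0) ∧
    Filter.Tendsto Φ (nhdsWithin 0 (Set.Ioi 0)) (nhds 0) ∧
    Filter.Tendsto Φ Filter.atTop
      (nhds (lam * (θ * (∫ ω, Y ω ∂μ) + (η / 2) * ∫ ω, (Y ω) ^ 2 ∂μ))) := by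
  set S : ℝ → ℝ := fun y => (μ {ω | y < Y ω}).toReal with hSdef
  have hSmeas : Measurable S := aux_S_meas μ Y
  have hSnonneg : ∀ y, 0 ≤ S y := fun _ => ENNReal.toReal_nonneg
  have hYint : Integrable Y μ := by
    have h1 : Integrable (fun ω => 1 + Y ω ^ 2) μ := (integrable_const 1).add hY2
    refine h1.mono' hYmeas.aestronglyMeasurable (ae_of_all _ (fun ω => ?_))
    rw [Real.norm_of_nonneg (hYnonneg ω)]
    nlinarith [sq_nonneg (Y ω - 1), hYnonneg ω]
  obtain ⟨hSint, hSval⟩ := aux_layer1 μ Y hYnonneg hYint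
  obtain ⟨hySint, hySval⟩ := aux_layer2 μ Y hYmeas hYnonneg hY2
  have hSint' : IntegrableOn S (Ioi 0) volume := hSint
  have hSval' : ∫ y in Ioi (0:ℝ), S y = ∫ ω, Y ω ∂μ := hSval
  have hySint' : IntegrableOn (fun y => y * S y) (Ioi 0) volume := hySint
  have hySval' : ∫ y in Ioi (0:ℝ), y * S y = (∫ ω, (Y ω) ^ 2 ∂μ) / 2 := hySval
  have hΦ' : ∀ ρ : ℝ, 0 < ρ → Φ ρ
      = lam * ρ * ∫ y in Ioi (0:ℝ), min ((θ + η * y) / (ρ + η)) y * S y :=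
    fun ρ hρ => hΦ ρ hρ
  -- bound function
  set B : ℝ → ℝ := fun y => (θ + η * y) * S y with hBdef
  have hBsplit : B = fun y => θ * S y + η * (y * S y) := by funext y; simp only [hBdef]; ring
  have hBint : IntegrableOn B (Ioi 0) volume := by
    rw [hBsplit]; exact (hSint'.const_mul θ).add (hySint'.const_mul η)
  have hBval : ∫ y in Ioi (0:ℝ), B y
      = θ * (∫ ω, Y ω ∂μ) + (η / 2) * ∫ ω, (Y ω) ^ 2 ∂μ := by
    rw [hBsplit, integral_add (hSint'.const_mul θ) (hySint'.const_mul η),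
      integral_const_mul, integral_const_mul, hSval', hySval']
    ring
  -- the integrand without the ρ factor
  have hmin_nonneg : ∀ ρ y : ℝ, 0 < ρ → 0 < y → 0 ≤ min ((θ + η * y) / (ρ + η)) y := by
    intro ρ y hρ hy
    exact le_min (by positivity) hy.le
  have hmin_le : ∀ ρ y : ℝ, 0 < ρ → 0 < y →
      min ((θ + η * y) / (ρ + η)) y ≤ (θ + η * y) / η := by
    intro ρ y hρ hy
    refine (min_le_left _ _).trans ?_
    have h1 : (0:ℝ) < η := hη
    have h2 : η ≤ ρ + η := by linarith
    gcongr
  have hmeas_f : ∀ ρ : ℝ,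
      Measurable (fun y => min ((θ + η * y) / (ρ + η)) y * S y) := by
    intro ρ
    exact (((continuous_const.add (continuous_const.mul continuous_id)).div_const
      _).min continuous_id).measurable.mul hSmeas
  have hfint : ∀ ρ : ℝ, 0 < ρ →
      IntegrableOn (fun y => min ((θ + η * y) / (ρ + η)) y * S y) (Ioi 0) volume := by
    intro ρ hρ
    refine Integrable.mono' ((hBint.const_mul (1/η)) : IntegrableOn _ _ _)
      (hmeas_f ρ).aestronglyMeasurable.restrict ?_
    refine (ae_restrict_iff' measurableSet_Ioi).2 (ae_of_all _ (fun y hy => ?_))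
    have hy0 : (0:ℝ) < y := hy
    rw [Real.norm_of_nonneg (mul_nonneg (hmin_nonneg ρ y hρ hy0) (hSnonneg y))]
    have : min ((θ + η * y) / (ρ + η)) y * S y ≤ ((θ + η * y) / η) * S y :=
      mul_le_mul_of_nonneg_right (hmin_le ρ y hρ hy0) (hSnonneg y)
    refine this.trans (le_of_eq ?_)
    simp only [hBdef]
    ring
  -- key uniform bound : ρ * min ≤ θ + η y
  have hkeybound : ∀ ρ y : ℝ, 0 < ρ → 0 < y →
      ρ * min ((θ + η * y) / (ρ + η)) y ≤ θ + η * y := by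
    intro ρ y hρ hy
    have h1 : ρ * min ((θ + η * y) / (ρ + η)) y ≤ ρ * ((θ + η * y) / (ρ + η)) :=
      mul_le_mul_of_nonneg_left (min_le_left _ _) hρ.le
    refine h1.trans ?_
    rw [mul_div_assoc', div_le_iff₀ (by positivity)]
    nlinarith [mul_nonneg (show (0:ℝ) ≤ θ + η * y by positivity) hη.le]
  -- positivity of support of S
  have hsuppS : 0 < volume.restrict (Ioi (0:ℝ)) (Function.support S) := by
    refine (integral_pos_iff_support_of_nonneg_ae (ae_of_all _ hSnonneg) hSint).1 ?_
    rw [hSval']; exact hEY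
  refine ⟨?_, ?_, ?_⟩
  · -- strict monotonicity
    intro ρ₁ h₁ ρ₂ h₂ h12
    have h₁0 : (0:ℝ) < ρ₁ := h₁
    have h₂0 : (0:ℝ) < ρ₂ := h₂
    rw [hΦ' ρ₁ h₁0, hΦ' ρ₂ h₂0, mul_assoc, mul_assoc, ← integral_const_mul ρ₁,
      ← integral_const_mul ρ₂]
    have hG1 : IntegrableOn (fun y => ρ₁ * (min ((θ + η * y) / (ρ₁ + η)) y * S y))
        (Ioi 0) volume := (hfint ρ₁ h₁0).const_mul ρ₁
    have hG2 : IntegrableOn (fun y => ρ₂ * (min ((θ + η * y) / (ρ₂ + η)) y * S y))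
        (Ioi 0) volume := (hfint ρ₂ h₂0).const_mul ρ₂
    have hstrict : ∀ y : ℝ, 0 < y →
        ρ₁ * min ((θ + η * y) / (ρ₁ + η)) y < ρ₂ * min ((θ + η * y) / (ρ₂ + η)) y := by
      intro y hy
      have hθηy : (0:ℝ) < θ + η * y := by positivity
      have ha : ρ₁ * ((θ + η * y) / (ρ₁ + η)) < ρ₂ * ((θ + η * y) / (ρ₂ + η)) := by
        rw [mul_div_assoc', mul_div_assoc', div_lt_div_iff₀ (by positivity) (by positivity)]
        nlinarith [mul_pos (mul_pos hη (sub_pos.2 h12)) hθηy]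
      rcases le_total ((θ + η * y) / (ρ₂ + η)) y with h | h
      · rw [min_eq_left h]
        exact lt_of_le_of_lt (mul_le_mul_of_nonneg_left (min_le_left _ _) h₁0.le) ha
      · rw [min_eq_right h]
        exact lt_of_le_of_lt (mul_le_mul_of_nonneg_left (min_le_right _ _) h₁0.le)
          (by nlinarith)
    refine mul_lt_mul_of_pos_left ?_ hlam
    have hdiffpos : 0 < ∫ y in Ioi (0:ℝ),
        (ρ₂ * (min ((θ + η * y) / (ρ₂ + η)) y * S y)
          - ρ₁ * (min ((θ + η * y) / (ρ₁ + η)) y * S y)) := by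
      refine (integral_pos_iff_support_of_nonneg_ae ?_ (hG2.sub hG1)).2 ?_
      · refine (ae_restrict_iff' measurableSet_Ioi).2 (ae_of_all _ (fun y hy => ?_))
        have := hstrict y hy
        have hS := hSnonneg y
        simp only [Pi.sub_apply, Pi.zero_apply, sub_nonneg, ← mul_assoc]
        exact mul_le_mul_of_nonneg_right this.le hS
      · rw [Measure.restrict_apply' measurableSet_Ioi] at hsuppS ⊢
        refine lt_of_lt_of_le hsuppS (measure_mono (fun y hy => ?_))
        obtain ⟨hyS, hy0⟩ := hy
        refine ⟨?_, hy0⟩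
        have hSpos : 0 < S y := lt_of_le_of_ne (hSnonneg y) (Ne.symm hyS)
        have : 0 < ρ₂ * (min ((θ + η * y) / (ρ₂ + η)) y * S y)
            - ρ₁ * (min ((θ + η * y) / (ρ₁ + η)) y * S y) := by
          have := hstrict y hy0
          nlinarith
        exact ne_of_gt this
    have := integral_sub hG2 hG1
    rw [this] at hdiffpos
    linarith
  · -- limit at 0⁺
    set K : ℝ := lam * ((1/η) * ∫ y in Ioi (0:ℝ), B y) with hKdef
    have hIle : ∀ ρ : ℝ, 0 < ρ →
        (∫ y in Ioi (0:ℝ), min ((θ + η * y) / (ρ + η)) y * S y)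
          ≤ (1/η) * ∫ y in Ioi (0:ℝ), B y := by
      intro ρ hρ
      rw [← integral_const_mul]
      refine setIntegral_mono_on (hfint ρ hρ) (hBint.const_mul (1/η))
        measurableSet_Ioi (fun y hy => ?_)
      have hy0 : (0:ℝ) < y := hy
      have : min ((θ + η * y) / (ρ + η)) y * S y ≤ ((θ + η * y) / η) * S y :=
        mul_le_mul_of_nonneg_right (hmin_le ρ y hρ hy0) (hSnonneg y)
      refine this.trans (le_of_eq ?_)
      simp only [hBdef]
      ring
    have hInn : ∀ ρ : ℝ, 0 < ρ →
        0 ≤ ∫ y in Ioi (0:ℝ), min ((θ + η * y) / (ρ + η)) y * S y := by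
      intro ρ hρ
      refine setIntegral_nonneg measurableSet_Ioi (fun y hy => ?_)
      exact mul_nonneg (hmin_nonneg ρ y hρ hy) (hSnonneg y)
    refine squeeze_zero' (g := fun ρ => K * ρ) ?_ ?_ ?_
    · refine eventually_mem_nhdsWithin.mono (fun ρ hρ => ?_)
      have hρ0 : (0:ℝ) < ρ := hρ
      rw [hΦ' ρ hρ0]
      have := hInn ρ hρ0
      positivity
    · refine eventually_mem_nhdsWithin.mono (fun ρ hρ => ?_)
      have hρ0 : (0:ℝ) < ρ := hρ
      rw [hΦ' ρ hρ0]
      calc lam * ρ * ∫ y in Ioi (0:ℝ), min ((θ + η * y) / (ρ + η)) y * S y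
          ≤ lam * ρ * ((1/η) * ∫ y in Ioi (0:ℝ), B y) :=
            mul_le_mul_of_nonneg_left (hIle ρ hρ0) (by positivity)
        _ = K * ρ := by rw [hKdef]; ring
    · have : Filter.Tendsto (fun ρ : ℝ => K * ρ) (nhds 0) (nhds (K * 0)) :=
        (continuous_const.mul continuous_id).tendsto 0
      rw [mul_zero] at this
      exact this.mono_left nhdsWithin_le_nhds
  · -- limit at ∞
    have hDCT : Filter.Tendsto
        (fun ρ : ℝ => ∫ y in Ioi (0:ℝ), ρ * (min ((θ + η * y) / (ρ + η)) y * S y))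
        Filter.atTop (nhds (∫ y in Ioi (0:ℝ), B y)) := by
      refine tendsto_integral_filter_of_dominated_convergence B ?_ ?_ hBint ?_
      · exact Filter.Eventually.of_forall (fun ρ =>
          (((hmeas_f ρ).const_mul ρ).aestronglyMeasurable).restrict)
      · refine (Filter.eventually_gt_atTop (0:ℝ)).mono (fun ρ hρ => ?_)
        refine (ae_restrict_iff' measurableSet_Ioi).2 (ae_of_all _ (fun y hy => ?_))
        have hy0 : (0:ℝ) < y := hy
        rw [Real.norm_of_nonneg (mul_nonneg hρ.le
          (mul_nonneg (hmin_nonneg ρ y hρ hy0) (hSnonneg y)))]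
        have h1 : ρ * (min ((θ + η * y) / (ρ + η)) y * S y)
            = (ρ * min ((θ + η * y) / (ρ + η)) y) * S y := by ring
        rw [h1]
        exact mul_le_mul_of_nonneg_right (hkeybound ρ y hρ hy0) (hSnonneg y)
      · refine (ae_restrict_iff' measurableSet_Ioi).2 (ae_of_all _ (fun y hy => ?_))
        have hy0 : (0:ℝ) < y := hy
        have hθηy : (0:ℝ) ≤ θ + η * y := by positivity
        -- first : ρ * ((θ+ηy)/(ρ+η)) → θ+ηy
        have hinv : Filter.Tendsto (fun ρ : ℝ => η / (ρ + η)) Filter.atTop (nhds 0) := by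
          have h1 : Filter.Tendsto (fun ρ : ℝ => ρ + η) Filter.atTop Filter.atTop :=
            Filter.tendsto_atTop_add_const_right _ η Filter.tendsto_id
          simpa [div_eq_mul_inv] using h1.inv_tendsto_atTop.const_mul η
        have htend : Filter.Tendsto
            (fun ρ : ℝ => ρ * ((θ + η * y) / (ρ + η))) Filter.atTop (nhds (θ + η * y)) := by
          have h2 : Filter.Tendsto (fun ρ : ℝ => (θ + η * y) * (1 - η / (ρ + η)))
              Filter.atTop (nhds ((θ + η * y) * (1 - 0))) :=
            (tendsto_const_nhds.sub hinv).const_mul _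
        
          rw [sub_zero, mul_one] at h2
          refine h2.congr' ?_
          refine (Filter.eventually_gt_atTop (0:ℝ)).mono (fun ρ hρ => ?_)
          have hne : ρ + η ≠ 0 := by positivity
          field_simp
          ring
        have hminev : ∀ᶠ ρ : ℝ in Filter.atTop,
            ρ * ((θ + η * y) / (ρ + η)) = ρ * min ((θ + η * y) / (ρ + η)) y := by
          refine ((Filter.eventually_ge_atTop (θ / y)).and
            (Filter.eventually_gt_atTop (0:ℝ))).mono ?_
          rintro ρ ⟨hρ1, hρ2⟩
          rw [min_eq_left ?_]
          rw [div_le_iff₀ (by linarith)]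
          have h3 : θ ≤ ρ * y := by
            have := (div_le_iff₀ hy0).1 hρ1
            linarith
          nlinarith
        have := (htend.congr' hminev).mul_const (S y)
        refine this.congr (fun ρ => by ring)
    have hfinal := hDCT.const_mul lam
    rw [hBval] at hfinal
    refine hfinal.congr' ?_
    refine (Filter.eventually_gt_atTop (0:ℝ)).mono (fun ρ hρ => ?_)
    simp only [hΦ' ρ hρ, integral_const_mul]
    ring
end

section
/- Let Y be a nonnegative random variable with E[Y²] < ∞, and let θ ≥ 0, η > 0, ρ > 0. Define R_D(y) = min((θ + ηy)/(ρ + η), y). Then for every Borel-measurable function R : [0,∞) → [0,∞) with 0 ≤ R(y) ≤ y for all y ≥ 0, one has θE[R(Y)] + ηE[Y R(Y)] − ((ρ + η)/2)E[R(Y)²] ≤ θE[R_D(Y)] + ηE[Y R_D(Y)] − ((ρ + η)/2)E[R_D(Y)²]. -/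
open MeasureTheory Real Set

lemma retention_pointwise (θ η ρ y r : ℝ) (hθ : 0 ≤ θ) (hη : 0 < η) (hρ : 0 < ρ)
    (hy : 0 ≤ y) (h0 : 0 ≤ r) (hr : r ≤ y) :
    θ * r + η * (y * r) - (ρ + η) / 2 * r ^ 2
      ≤ θ * min ((θ + η * y) / (ρ + η)) y + η * (y * min ((θ + η * y) / (ρ + η)) y)
        - (ρ + η) / 2 * (min ((θ + η * y) / (ρ + η)) y) ^ 2 := by
  have hs : 0 < ρ + η := by linarith
  set m := (θ + η * y) / (ρ + η) with hm
  have hkey : (ρ + η) * m = θ + η * y := by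
    rw [hm]; field_simp
  rcases le_total m y with h | h
  · rw [min_eq_left h]
    nlinarith [sq_nonneg (r - m)]
  · rw [min_eq_right h]
    nlinarith [mul_nonneg (sub_nonneg.2 hr) (sub_nonneg.2 h),
      mul_nonneg (sub_nonneg.2 hr) (sub_nonneg.2 (hr.trans h))]

/-- Functional maximization underlying Proposition 3.2: among all Borel retention functions
`R` with `0 ≤ R(y) ≤ y`, the retention `R_D(y) = min((θ + ηy)/(ρ + η), y)` maximizes
`θE[R(Y)] + ηE[Y R(Y)] − ((ρ + η)/2)E[R(Y)²]`. -/
theorem retention_RD_maximizes_functional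
    {Ω : Type*} [MeasurableSpace Ω] (μ : Measure Ω) [IsProbabilityMeasure μ]
    (Y : Ω → ℝ) (hYmeas : Measurable Y) (hYnonneg : ∀ ω, 0 ≤ Y ω)
    (hY2 : Integrable (fun ω => (Y ω) ^ 2) μ)
    (θ η ρ : ℝ) (hθ : 0 ≤ θ) (hη : 0 < η) (hρ : 0 < ρ)
    (RD : ℝ → ℝ) (hRD : ∀ y : ℝ, RD y = min ((θ + η * y) / (ρ + η)) y)
    (R : ℝ → ℝ) (hRmeas : Measurable R)
    (hR : ∀ y : ℝ, 0 ≤ y → 0 ≤ R y ∧ R y ≤ y) :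
    θ * (∫ ω, R (Y ω) ∂μ) + η * (∫ ω, Y ω * R (Y ω) ∂μ)
        - (ρ + η) / 2 * ∫ ω, (R (Y ω)) ^ 2 ∂μ
      ≤ θ * (∫ ω, RD (Y ω) ∂μ) + η * (∫ ω, Y ω * RD (Y ω) ∂μ)
        - (ρ + η) / 2 * ∫ ω, (RD (Y ω)) ^ 2 ∂μ := by
  have hRDmeas : Measurable RD := by
    have : RD = fun y => min ((θ + η * y) / (ρ + η)) y := funext hRD
    rw [this]; fun_prop
  have hRDbd : ∀ y : ℝ, 0 ≤ y → 0 ≤ RD y ∧ RD y ≤ y := by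
    intro y hy
    rw [hRD y]
    constructor
    · exact le_min (div_nonneg (by nlinarith) (by linarith)) hy
    · exact min_le_right _ _
  have hY1 : Integrable Y μ := by
    refine (hY2.add (integrable_const 1)).mono (hYmeas.aestronglyMeasurable) ?_
    filter_upwards with ω
    simp only [Pi.add_apply, Real.norm_eq_abs]
    rw [abs_of_nonneg (hYnonneg ω), abs_of_nonneg (by positivity)]
    nlinarith [sq_nonneg (Y ω - 1)]
  -- integrability lemmas for a generic retention function
  have key : ∀ S : ℝ → ℝ, Measurable S → (∀ y : ℝ, 0 ≤ y → 0 ≤ S y ∧ S y ≤ y) →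
      Integrable (fun ω => S (Y ω)) μ ∧ Integrable (fun ω => Y ω * S (Y ω)) μ ∧
      Integrable (fun ω => (S (Y ω)) ^ 2) μ := by
    intro S hSm hSb
    have hbd : ∀ ω, 0 ≤ S (Y ω) ∧ S (Y ω) ≤ Y ω := fun ω => hSb _ (hYnonneg ω)
    refine ⟨?_, ?_, ?_⟩
    · refine hY1.mono (hSm.comp hYmeas).aestronglyMeasurable ?_
      filter_upwards with ω
      rw [Real.norm_eq_abs, Real.norm_eq_abs, abs_of_nonneg (hbd ω).1,
        abs_of_nonneg (hYnonneg ω)]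
      exact (hbd ω).2
    · refine hY2.mono (hYmeas.mul (hSm.comp hYmeas)).aestronglyMeasurable ?_
      filter_upwards with ω
      have h1 := (hbd ω).1; have h2 := (hbd ω).2; have h3 := hYnonneg ω
      rw [Real.norm_eq_abs, Real.norm_eq_abs, abs_of_nonneg (by positivity),
        abs_of_nonneg (by positivity)]
      nlinarith
    · refine hY2.mono ((hSm.comp hYmeas).pow_const 2).aestronglyMeasurable ?_
      filter_upwards with ω
      have h1 := (hbd ω).1; have h2 := (hbd ω).2; have h3 := hYnonneg ω
      rw [Real.norm_eq_abs, Real.norm_eq_abs, abs_of_nonneg (by positivity),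
        abs_of_nonneg (by positivity)]
      nlinarith
  obtain ⟨iR, iYR, iR2⟩ := key R hRmeas hR
  obtain ⟨iD, iYD, iD2⟩ := key RD hRDmeas hRDbd
  have comb : ∀ (S : ℝ → ℝ), Integrable (fun ω => S (Y ω)) μ →
      Integrable (fun ω => Y ω * S (Y ω)) μ → Integrable (fun ω => (S (Y ω)) ^ 2) μ →
      θ * (∫ ω, S (Y ω) ∂μ) + η * (∫ ω, Y ω * S (Y ω) ∂μ)
        - (ρ + η) / 2 * ∫ ω, (S (Y ω)) ^ 2 ∂μ
      = ∫ ω, (θ * S (Y ω) + η * (Y ω * S (Y ω)) - (ρ + η) / 2 * (S (Y ω)) ^ 2) ∂μ := by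
    intro S i1 i2 i3
    have h12 : Integrable (fun ω => θ * S (Y ω) + η * (Y ω * S (Y ω))) μ :=
      (i1.const_mul θ).add (i2.const_mul η)
    rw [integral_sub h12 (i3.const_mul _),
      integral_add (i1.const_mul θ) (i2.const_mul η),
      MeasureTheory.integral_const_mul, MeasureTheory.integral_const_mul, MeasureTheory.integral_const_mul]
  rw [comb R iR iYR iR2, comb RD iD iYD iD2]
  refine integral_mono ?_ ?_ ?_
  · exact ((iR.const_mul θ).add (iYR.const_mul η)).sub (iR2.const_mul _)
  · exact ((iD.const_mul θ).add (iYD.const_mul η)).sub (iD2.const_mul _)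
  · intro ω
    simp only [hRD]
    exact retention_pointwise θ η ρ (Y ω) (R (Y ω)) hθ hη hρ (hYnonneg ω)
      (hR _ (hYnonneg ω)).1 (hR _ (hYnonneg ω)).2
end

section
/- Let Y be a nonnegative random variable with E[Y] > 0 and E[Y²] < ∞, with survival function S_Y(y) = P(Y > y); let n > 0, λ > 0, θ ≥ 0, η > 0, and let c satisfy λE[Y] < c < (1+θ)λE[Y] + (η/2)λE[Y²]. For ρ > 0 and t ≥ 0, define Ř(t; ρ) = t if 0 ≤ t ≤ (√n/ρ) ln(1 + θ/√n), and otherwise let Ř(t; ρ) be the unique solution r ∈ [0, t) of (√n + θ) + η(t − r) = √n e^{ρ r/√n}. Then there exists a unique ρ > 0 solving c − λE[Y] = √n λ ∫₀^∞ (e^{ρ Ř(t;ρ)/√n} − 1) S_Y(t) dt. -/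
open MeasureTheory Real Filter Set

section AuxPointwise

variable {s θ η : ℝ} {Rc : ℝ → ℝ → ℝ}
variable (hs : 0 < s) (hθ : 0 ≤ θ) (hη : 0 < η)
variable (hR1 : ∀ ρ : ℝ, 0 < ρ → ∀ t : ℝ, 0 ≤ t → t ≤ s / ρ * Real.log (1 + θ / s) → Rc t ρ = t)
variable (hR2 : ∀ ρ : ℝ, 0 < ρ → ∀ t : ℝ, s / ρ * Real.log (1 + θ / s) < t →
      0 ≤ Rc t ρ ∧ Rc t ρ < t ∧
        (s + θ) + η * (t - Rc t ρ) = s * Real.exp (ρ * Rc t ρ / s))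



/-- Region 1: below the threshold, `exp(ρ Ř/s) = exp(ρ t/s) ≤ 1 + θ/s`. -/
lemma aux_reg1 (hs : 0 < s) (hθ : 0 ≤ θ)
    (hR1 : ∀ ρ : ℝ, 0 < ρ → ∀ t : ℝ, 0 ≤ t → t ≤ s / ρ * Real.log (1 + θ / s) → Rc t ρ = t)
    {ρ t : ℝ} (hρ : 0 < ρ) (ht : 0 ≤ t) (hT : t ≤ s / ρ * Real.log (1 + θ / s)) :
    Real.exp (ρ * Rc t ρ / s) = Real.exp (ρ * t / s) ∧
      Real.exp (ρ * t / s) ≤ 1 + θ / s := by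
  have h1 : Rc t ρ = t := hR1 ρ hρ t ht hT
  refine ⟨by rw [h1], ?_⟩
  have hpos : (0:ℝ) < 1 + θ / s := by positivity
  have hT' : t * ρ ≤ s * Real.log (1 + θ / s) := by
    rw [div_mul_eq_mul_div, le_div_iff₀ hρ] at hT; linarith
  have hlog : ρ * t / s ≤ Real.log (1 + θ / s) := by
    rw [div_le_iff₀ hs]; nlinarith
  calc Real.exp (ρ * t / s) ≤ Real.exp (Real.log (1 + θ / s)) := Real.exp_le_exp.mpr hlog
  _ = 1 + θ / s := Real.exp_log hpos

/-- The threshold is nonnegative. -/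
lemma aux_T_nonneg (hs : 0 < s) (hθ : 0 ≤ θ) {ρ : ℝ} (hρ : 0 < ρ) :
    0 ≤ s / ρ * Real.log (1 + θ / s) := by
  have : (0:ℝ) ≤ Real.log (1 + θ / s) := Real.log_nonneg (by nlinarith [div_nonneg hθ hs.le])
  positivity

/-- The threshold is antitone in `ρ`. -/
lemma aux_T_anti (hs : 0 < s) (hθ : 0 ≤ θ) {ρ₁ ρ₂ : ℝ} (h1 : 0 < ρ₁) (h12 : ρ₁ ≤ ρ₂) :
    s / ρ₂ * Real.log (1 + θ / s) ≤ s / ρ₁ * Real.log (1 + θ / s) := by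
  have hl : (0:ℝ) ≤ Real.log (1 + θ / s) := Real.log_nonneg (by nlinarith [div_nonneg hθ hs.le])
  have : s / ρ₂ ≤ s / ρ₁ := by
    apply div_le_div_of_nonneg_left hs.le h1 h12
  exact mul_le_mul_of_nonneg_right this hl

/-- Region 2 facts, phrased for the exponential. -/
lemma aux_reg2 (hs : 0 < s) (hθ : 0 ≤ θ) (hη : 0 < η)
    (hR2 : ∀ ρ : ℝ, 0 < ρ → ∀ t : ℝ, s / ρ * Real.log (1 + θ / s) < t →
      0 ≤ Rc t ρ ∧ Rc t ρ < t ∧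
        (s + θ) + η * (t - Rc t ρ) = s * Real.exp (ρ * Rc t ρ / s))
    {ρ t : ℝ} (hρ : 0 < ρ) (hT : s / ρ * Real.log (1 + θ / s) < t) :
    0 ≤ Rc t ρ ∧ Rc t ρ < t ∧
      Real.exp (ρ * Rc t ρ / s) = 1 + (θ + η * (t - Rc t ρ)) / s ∧
      1 + θ / s < Real.exp (ρ * Rc t ρ / s) ∧
      Real.exp (ρ * Rc t ρ / s) ≤ 1 + (θ + η * t) / s := by
  obtain ⟨h0, hlt, heq⟩ := hR2 ρ hρ t hT
  have hform : Real.exp (ρ * Rc t ρ / s) = 1 + (θ + η * (t - Rc t ρ)) / s := by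
    field_simp
    linarith [heq]
  refine ⟨h0, hlt, hform, ?_, ?_⟩
  · rw [hform]
    have h1 : 0 < η * (t - Rc t ρ) := by nlinarith
    have : θ / s < (θ + η * (t - Rc t ρ)) / s :=
      (div_lt_div_iff_of_pos_right hs).mpr (by linarith)
    linarith
  · rw [hform]
    have : (θ + η * (t - Rc t ρ)) / s ≤ (θ + η * t) / s :=
      (div_le_div_iff_of_pos_right hs).mpr (by nlinarith)
    linarith


include hs hθ hη hR1 hR2

/-- Global bounds: `1 ≤ u ρ t ≤ min (exp(ρt/s)) (1 + (θ+ηt)/s)`. -/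
lemma aux_bounds {ρ t : ℝ} (hρ : 0 < ρ) (ht : 0 ≤ t) :
    1 ≤ Real.exp (ρ * Rc t ρ / s) ∧
      Real.exp (ρ * Rc t ρ / s) ≤ 1 + (θ + η * t) / s ∧
      Real.exp (ρ * Rc t ρ / s) ≤ Real.exp (ρ * t / s) := by
  rcases le_or_gt t (s / ρ * Real.log (1 + θ / s)) with hT | hT
  · obtain ⟨he, hb⟩ := aux_reg1 hs hθ hR1 hρ ht hT
    rw [he]
    refine ⟨Real.one_le_exp (by positivity), ?_, le_refl _⟩
    have : θ / s ≤ (θ + η * t) / s := (div_le_div_iff_of_pos_right hs).mpr (by nlinarith)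
    linarith
  · obtain ⟨h0, hlt, _, hgt, hub⟩ := aux_reg2 hs hθ hη hR2 hρ hT
    have h1 : (1:ℝ) ≤ 1 + θ / s := by
      have : 0 ≤ θ / s := div_nonneg hθ hs.le
      linarith
    refine ⟨le_trans h1 hgt.le, hub, Real.exp_le_exp.mpr ?_⟩
    have : ρ * Rc t ρ ≤ ρ * t := by nlinarith
    exact div_le_div_of_nonneg_right this hs.le
  
/-- Monotone in `t` on `[0,∞)`. -/
lemma aux_mono_t {ρ : ℝ} (hρ : 0 < ρ) :
    MonotoneOn (fun t => Real.exp (ρ * Rc t ρ / s)) (Ici (0:ℝ)) := by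
  intro t₁ ht₁ t₂ ht₂ h12
  simp only [mem_Ici] at ht₁ ht₂
  dsimp only
  rcases le_or_gt t₂ (s / ρ * Real.log (1 + θ / s)) with hT2 | hT2
  · -- both region 1
    have hT1 : t₁ ≤ s / ρ * Real.log (1 + θ / s) := le_trans h12 hT2
    rw [(aux_reg1 hs hθ hR1 hρ ht₁ hT1).1, (aux_reg1 hs hθ hR1 hρ ht₂ hT2).1]
    apply Real.exp_le_exp.mpr
    apply div_le_div_of_nonneg_right _ hs.le
    nlinarith
  rcases le_or_gt t₁ (s / ρ * Real.log (1 + θ / s)) with hT1 | hT1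
  · -- mixed
    obtain ⟨he, hb⟩ := aux_reg1 hs hθ hR1 hρ ht₁ hT1
    obtain ⟨_, _, _, hgt, _⟩ := aux_reg2 hs hθ hη hR2 hρ hT2
    rw [he]; exact le_trans hb hgt.le
  · -- both region 2
    obtain ⟨h01, hlt1, hf1, _, _⟩ := aux_reg2 hs hθ hη hR2 hρ hT1
    obtain ⟨h02, hlt2, hf2, _, _⟩ := aux_reg2 hs hθ hη hR2 hρ hT2
    -- first : Rc t₁ ρ ≤ Rc t₂ ρ
    have hr12 : Rc t₁ ρ ≤ Rc t₂ ρ := by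
      by_contra hcon
      push_neg at hcon
      -- then t₂ - Rc t₂ > t₁ - Rc t₁, so u₂ > u₁; but exp monotone gives u₂ < u₁
      have h1 : Real.exp (ρ * Rc t₂ ρ / s) < Real.exp (ρ * Rc t₁ ρ / s) :=
        Real.exp_lt_exp.mpr ((div_lt_div_iff_of_pos_right hs).mpr (by nlinarith))
      rw [hf1, hf2] at h1
      have : (θ + η * (t₁ - Rc t₁ ρ)) / s < (θ + η * (t₂ - Rc t₂ ρ)) / s :=
        (div_lt_div_iff_of_pos_right hs).mpr (by nlinarith)
      linarith
    rw [hf1, hf2]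
    have : (θ + η * (t₁ - Rc t₁ ρ)) ≤ (θ + η * (t₂ - Rc t₂ ρ)) := by
      -- from exp monotonicity: u₁ ≤ u₂ since ρ Rc t₁ ≤ ρ Rc t₂
      have := Real.exp_le_exp.mpr (div_le_div_of_nonneg_right
        (mul_le_mul_of_nonneg_left hr12 hρ.le) hs.le)
      rw [hf1, hf2] at this
      have h2 := (div_le_div_iff_of_pos_right hs).mp (by linarith : (θ + η * (t₁ - Rc t₁ ρ)) / s ≤ (θ + η * (t₂ - Rc t₂ ρ)) / s)
      linarith
    have := (div_le_div_iff_of_pos_right hs).mpr this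
    linarith

/-- Strictly monotone in `ρ` for `t > 0`. -/
lemma aux_smono_rho {ρ₁ ρ₂ t : ℝ} (h1 : 0 < ρ₁) (h12 : ρ₁ < ρ₂) (ht : 0 < t) :
    Real.exp (ρ₁ * Rc t ρ₁ / s) < Real.exp (ρ₂ * Rc t ρ₂ / s) := by
  have h2 : 0 < ρ₂ := lt_trans h1 h12
  have hanti := aux_T_anti hs hθ h1 h12.le
  rcases le_or_gt t (s / ρ₂ * Real.log (1 + θ / s)) with hT2 | hT2
  · -- both region 1
    have hT1 : t ≤ s / ρ₁ * Real.log (1 + θ / s) := le_trans hT2 hanti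
    rw [(aux_reg1 hs hθ hR1 h1 ht.le hT1).1, (aux_reg1 hs hθ hR1 h2 ht.le hT2).1]
    exact Real.exp_lt_exp.mpr ((div_lt_div_iff_of_pos_right hs).mpr (by nlinarith))
  rcases le_or_gt t (s / ρ₁ * Real.log (1 + θ / s)) with hT1 | hT1
  · -- mixed: t ≤ T(ρ₁), t > T(ρ₂)
    obtain ⟨he, hb⟩ := aux_reg1 hs hθ hR1 h1 ht.le hT1
    obtain ⟨_, _, _, hgt, _⟩ := aux_reg2 hs hθ hη hR2 h2 hT2
    rw [he]; exact lt_of_le_of_lt hb hgt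
  · -- both region 2
    obtain ⟨h01, hlt1, hf1, _, _⟩ := aux_reg2 hs hθ hη hR2 h1 hT1
    obtain ⟨h02, hlt2, hf2, _, _⟩ := aux_reg2 hs hθ hη hR2 h2 hT2
    -- Rc t ρ₁ > 0
    have hr1pos : 0 < Rc t ρ₁ := by
      rcases lt_or_eq_of_le h01 with h | h
      · exact h
      exfalso
      have hf1' := hf1
      rw [← h, mul_zero, zero_div, Real.exp_zero, sub_zero] at hf1'
      have hpos : 0 < (θ + η * t) / s := div_pos (by nlinarith) hs
      linarith [hf1']
    -- Rc t ρ₂ < Rc t ρ₁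
    have hr21 : Rc t ρ₂ < Rc t ρ₁ := by
      by_contra hcon
      push_neg at hcon
      have hlt : Real.exp (ρ₁ * Rc t ρ₁ / s) < Real.exp (ρ₂ * Rc t ρ₂ / s) :=
        Real.exp_lt_exp.mpr ((div_lt_div_iff_of_pos_right hs).mpr (by nlinarith))
      rw [hf1, hf2] at hlt
      have : (θ + η * (t - Rc t ρ₂)) / s ≤ (θ + η * (t - Rc t ρ₁)) / s :=
        (div_le_div_iff_of_pos_right hs).mpr (by nlinarith)
      linarith
    rw [hf1, hf2]
    have : (θ + η * (t - Rc t ρ₁)) / s < (θ + η * (t - Rc t ρ₂)) / s :=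
      (div_lt_div_iff_of_pos_right hs).mpr (by nlinarith)
    linarith

/-- Non-strict monotonicity in `ρ` for `t ≥ 0`. -/
lemma aux_mono_rho {ρ₁ ρ₂ t : ℝ} (h1 : 0 < ρ₁) (h12 : ρ₁ ≤ ρ₂) (ht : 0 ≤ t) :
    Real.exp (ρ₁ * Rc t ρ₁ / s) ≤ Real.exp (ρ₂ * Rc t ρ₂ / s) := by
  rcases eq_or_lt_of_le h12 with rfl | h12'
  · exact le_refl _
  rcases eq_or_lt_of_le ht with rfl | ht'
  · -- t = 0 : both are exp 0 = 1
    have h2 : 0 < ρ₂ := lt_trans h1 h12'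
    have e1 : Rc 0 ρ₁ = 0 := hR1 ρ₁ h1 0 le_rfl (aux_T_nonneg hs hθ h1)
    have e2 : Rc 0 ρ₂ = 0 := hR1 ρ₂ h2 0 le_rfl (aux_T_nonneg hs hθ h2)
    rw [e1, e2]
    simp
  · exact (aux_smono_rho hs hθ hη hR1 hR2 h1 h12' ht').le

/-- Lipschitz-type modulus bound in `ρ`. -/
lemma aux_lip {ρ₁ ρ₂ t : ℝ} (h1 : 0 < ρ₁) (h12 : ρ₁ ≤ ρ₂) (ht : 0 ≤ t) :
    Real.exp (ρ₂ * Rc t ρ₂ / s) - Real.exp (ρ₁ * Rc t ρ₁ / s)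
      ≤ Real.exp (ρ₂ * t / s) * (Real.exp ((ρ₂ - ρ₁) * t / s) - 1) := by
  have h2 : 0 < ρ₂ := lt_of_lt_of_le h1 h12
  have hanti := aux_T_anti hs hθ h1 h12
  -- key pointwise bound: for 0 ≤ b ≤ t,
  -- exp(ρ₂ b/s) - exp(ρ₁ b/s) ≤ exp(ρ₂ t/s) (exp((ρ₂-ρ₁) t/s) - 1)
  have key : ∀ b : ℝ, 0 ≤ b → b ≤ t →
      Real.exp (ρ₂ * b / s) - Real.exp (ρ₁ * b / s)
        ≤ Real.exp (ρ₂ * t / s) * (Real.exp ((ρ₂ - ρ₁) * t / s) - 1) := by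
    intro b hb0 hbt
    have e1 : Real.exp (ρ₂ * b / s) - Real.exp (ρ₁ * b / s)
        = Real.exp (ρ₁ * b / s) * (Real.exp ((ρ₂ - ρ₁) * b / s) - 1) := by
      rw [mul_sub, ← Real.exp_add, mul_one]
      congr 1
      ring
    rw [e1]
    have hA : Real.exp (ρ₁ * b / s) ≤ Real.exp (ρ₂ * t / s) :=
      Real.exp_le_exp.mpr ((div_le_div_iff_of_pos_right hs).mpr (by nlinarith))
    have hB : Real.exp ((ρ₂ - ρ₁) * b / s) - 1 ≤ Real.exp ((ρ₂ - ρ₁) * t / s) - 1 := by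
      have := Real.exp_le_exp.mpr ((div_le_div_iff_of_pos_right hs).mpr
        (by nlinarith : (ρ₂ - ρ₁) * b ≤ (ρ₂ - ρ₁) * t))
      linarith
    have hBnn : 0 ≤ Real.exp ((ρ₂ - ρ₁) * b / s) - 1 := by
      have : (1:ℝ) ≤ Real.exp ((ρ₂ - ρ₁) * b / s) :=
        Real.one_le_exp (div_nonneg (mul_nonneg (by linarith) hb0) hs.le)
      linarith
    calc Real.exp (ρ₁ * b / s) * (Real.exp ((ρ₂ - ρ₁) * b / s) - 1)
        ≤ Real.exp (ρ₂ * t / s) * (Real.exp ((ρ₂ - ρ₁) * b / s) - 1) :=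
          mul_le_mul_of_nonneg_right hA hBnn
      _ ≤ Real.exp (ρ₂ * t / s) * (Real.exp ((ρ₂ - ρ₁) * t / s) - 1) :=
          mul_le_mul_of_nonneg_left hB (Real.exp_pos _).le
  rcases le_or_gt t (s / ρ₂ * Real.log (1 + θ / s)) with hT2 | hT2
  · -- both region 1
    have hT1 : t ≤ s / ρ₁ * Real.log (1 + θ / s) := le_trans hT2 hanti
    rw [(aux_reg1 hs hθ hR1 h1 ht hT1).1, (aux_reg1 hs hθ hR1 h2 ht hT2).1]
    exact key t ht le_rfl
  rcases le_or_gt t (s / ρ₁ * Real.log (1 + θ / s)) with hT1 | hT1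
  · -- mixed
    obtain ⟨he, _⟩ := aux_reg1 hs hθ hR1 h1 ht hT1
    obtain ⟨h02, hlt2, _, _, _⟩ := aux_reg2 hs hθ hη hR2 h2 hT2
    rw [he]
    have : Real.exp (ρ₂ * Rc t ρ₂ / s) ≤ Real.exp (ρ₂ * t / s) :=
      Real.exp_le_exp.mpr ((div_le_div_iff_of_pos_right hs).mpr (by nlinarith))
    calc Real.exp (ρ₂ * Rc t ρ₂ / s) - Real.exp (ρ₁ * t / s)
        ≤ Real.exp (ρ₂ * t / s) - Real.exp (ρ₁ * t / s) := by linarith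
      _ ≤ _ := key t ht le_rfl
  · -- both region 2
    obtain ⟨h01, hlt1, hf1, _, _⟩ := aux_reg2 hs hθ hη hR2 h1 hT1
    obtain ⟨h02, hlt2, hf2, _, _⟩ := aux_reg2 hs hθ hη hR2 h2 hT2
    have hr21 : Rc t ρ₂ ≤ Rc t ρ₁ := by
      by_contra hcon
      push_neg at hcon
      have hlt : Real.exp (ρ₁ * Rc t ρ₁ / s) < Real.exp (ρ₂ * Rc t ρ₂ / s) :=
        Real.exp_lt_exp.mpr ((div_lt_div_iff_of_pos_right hs).mpr (by nlinarith))
      rw [hf1, hf2] at hlt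
      have : (θ + η * (t - Rc t ρ₂)) / s < (θ + η * (t - Rc t ρ₁)) / s :=
        (div_lt_div_iff_of_pos_right hs).mpr (by nlinarith)
      linarith
    have step : Real.exp (ρ₂ * Rc t ρ₂ / s) ≤ Real.exp (ρ₂ * Rc t ρ₁ / s) :=
      Real.exp_le_exp.mpr ((div_le_div_iff_of_pos_right hs).mpr (by nlinarith))
    calc Real.exp (ρ₂ * Rc t ρ₂ / s) - Real.exp (ρ₁ * Rc t ρ₁ / s)
        ≤ Real.exp (ρ₂ * Rc t ρ₁ / s) - Real.exp (ρ₁ * Rc t ρ₁ / s) := by linarith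
      _ ≤ _ := key (Rc t ρ₁) h01 hlt1.le

/-- As `ρ → 0⁺`, `u ρ t → 1`. -/
lemma aux_tendsto_zero {t : ℝ} (ht : 0 ≤ t) :
    Tendsto (fun ρ => Real.exp (ρ * Rc t ρ / s)) (nhdsWithin 0 (Ioi 0)) (nhds 1) := by
  have hup : Tendsto (fun ρ : ℝ => Real.exp (ρ * t / s)) (nhdsWithin 0 (Ioi 0)) (nhds 1) := by
    have hcont : Continuous fun ρ : ℝ => Real.exp (ρ * t / s) := by continuity
    have := hcont.tendsto 0
    simp at this
    exact this.mono_left nhdsWithin_le_nhds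
  refine tendsto_of_tendsto_of_tendsto_of_le_of_le' tendsto_const_nhds hup ?_ ?_
  · filter_upwards [self_mem_nhdsWithin] with ρ hρ
    exact (aux_bounds hs hθ hη hR1 hR2 hρ ht).1
  · filter_upwards [self_mem_nhdsWithin] with ρ hρ
    exact (aux_bounds hs hθ hη hR1 hR2 hρ ht).2.2

/-- As `ρ → ∞`, `u ρ t → 1 + (θ + ηt)/s` for `t > 0`. -/
lemma aux_tendsto_top {t : ℝ} (ht : 0 < t) :
    Tendsto (fun ρ => Real.exp (ρ * Rc t ρ / s)) atTop
      (nhds (1 + (θ + η * t) / s)) := by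
  set C := Real.log (1 + (θ + η * t) / s) with hC
  have hCnn : 0 ≤ C := Real.log_nonneg (by
    have : 0 ≤ (θ + η * t) / s := div_nonneg (by nlinarith) hs.le
    linarith)
  have hlow : Tendsto (fun ρ : ℝ => 1 + (θ + η * t) / s - η * C / ρ) atTop
      (nhds (1 + (θ + η * t) / s)) := by
    have h0 : Tendsto (fun ρ : ℝ => η * C / ρ) atTop (nhds 0) :=
      Tendsto.div_atTop tendsto_const_nhds tendsto_id
    simpa using tendsto_const_nhds.sub h0
  refine tendsto_of_tendsto_of_tendsto_of_le_of_le' hlow tendsto_const_nhds ?_ ?_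
  · -- eventual lower bound
    filter_upwards [eventually_gt_atTop (max 0 (s * Real.log (1 + θ / s) / t))] with ρ hρ
    have hρ0 : 0 < ρ := lt_of_le_of_lt (le_max_left _ _) hρ
    have hT : s / ρ * Real.log (1 + θ / s) < t := by
      have h2 : s * Real.log (1 + θ / s) / t < ρ := lt_of_le_of_lt (le_max_right _ _) hρ
      rw [div_mul_eq_mul_div, div_lt_iff₀ hρ0]
      rw [div_lt_iff₀ ht] at h2
      linarith
    obtain ⟨h0, hlt, hf, _, hub⟩ := aux_reg2 hs hθ hη hR2 hρ0 hT
    -- r ≤ s C / ρ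
    have hrC : Rc t ρ ≤ s * C / ρ := by
      have hlog : ρ * Rc t ρ / s ≤ C := by
        rw [hC]
        have h1 : Real.exp (ρ * Rc t ρ / s) ≤ 1 + (θ + η * t) / s := hub
        have h2 := Real.log_le_log (Real.exp_pos _) h1
        rwa [Real.log_exp] at h2
      rw [le_div_iff₀ hρ0]
      rw [div_le_iff₀ hs] at hlog
      nlinarith
    rw [hf]
    have hkey : η * Rc t ρ / s ≤ η * C / ρ := by
      rw [div_le_div_iff₀ hs hρ0]
      rw [le_div_iff₀ hρ0] at hrC
      nlinarith
    have hsub : η * t / s - η * (t - Rc t ρ) / s = η * Rc t ρ / s := by ring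
    have hsplit : (θ + η * (t - Rc t ρ)) / s = θ / s + η * (t - Rc t ρ) / s := by ring
    have hsplit2 : (θ + η * t) / s = θ / s + η * t / s := by ring
    rw [hsplit]
    rw [hsplit2]
    linarith
  · -- eventual upper bound
    filter_upwards [eventually_gt_atTop (0:ℝ)] with ρ hρ
    exact (aux_bounds hs hθ hη hR1 hR2 hρ ht.le).2.1

/-- Continuity in `ρ` on `(0,∞)`. -/
lemma aux_cont {t ρ₀ : ℝ} (ht : 0 ≤ t) (hρ₀ : 0 < ρ₀) :
    Tendsto (fun ρ => Real.exp (ρ * Rc t ρ / s)) (nhdsWithin ρ₀ (Ioi 0))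
      (nhds (Real.exp (ρ₀ * Rc t ρ₀ / s))) := by
  rw [tendsto_iff_dist_tendsto_zero]
  have hB : Tendsto (fun ρ : ℝ => Real.exp ((ρ + ρ₀) * t / s) *
      (Real.exp (|ρ - ρ₀| * t / s) - 1)) (nhdsWithin ρ₀ (Ioi 0)) (nhds 0) := by
    have hcont : Continuous fun ρ : ℝ => Real.exp ((ρ + ρ₀) * t / s) *
        (Real.exp (|ρ - ρ₀| * t / s) - 1) := by continuity
    have h0 := hcont.tendsto ρ₀
    simp at h0
    exact h0.mono_left nhdsWithin_le_nhds
  apply squeeze_zero' ?_ ?_ hB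
  · filter_upwards with ρ
    exact dist_nonneg
  · filter_upwards [self_mem_nhdsWithin] with ρ hρ
    simp only [mem_Ioi] at hρ
    rw [Real.dist_eq]
    rcases le_total ρ₀ ρ with hle | hle
    · have h1 := aux_lip hs hθ hη hR1 hR2 hρ₀ hle ht
      have h2 := aux_mono_rho hs hθ hη hR1 hR2 hρ₀ hle ht
      rw [abs_of_nonneg (by linarith)]
      rw [abs_of_nonneg (by linarith)]
      calc Real.exp (ρ * Rc t ρ / s) - Real.exp (ρ₀ * Rc t ρ₀ / s)
          ≤ Real.exp (ρ * t / s) * (Real.exp ((ρ - ρ₀) * t / s) - 1) := h1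
        _ ≤ Real.exp ((ρ + ρ₀) * t / s) * (Real.exp ((ρ - ρ₀) * t / s) - 1) := by
            apply mul_le_mul_of_nonneg_right
            · exact Real.exp_le_exp.mpr ((div_le_div_iff_of_pos_right hs).mpr (by nlinarith))
            · have : (1:ℝ) ≤ Real.exp ((ρ - ρ₀) * t / s) :=
                Real.one_le_exp (div_nonneg (mul_nonneg (by linarith) ht) hs.le)
              linarith
    · have h1 := aux_lip hs hθ hη hR1 hR2 hρ hle ht
      have h2 := aux_mono_rho hs hθ hη hR1 hR2 hρ hle ht
      rw [abs_of_nonpos (by linarith)]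
      rw [abs_of_nonpos (by linarith)]
      calc -(Real.exp (ρ * Rc t ρ / s) - Real.exp (ρ₀ * Rc t ρ₀ / s))
          = Real.exp (ρ₀ * Rc t ρ₀ / s) - Real.exp (ρ * Rc t ρ / s) := by ring
        _ ≤ Real.exp (ρ₀ * t / s) * (Real.exp ((ρ₀ - ρ) * t / s) - 1) := h1
        _ ≤ Real.exp ((ρ + ρ₀) * t / s) * (Real.exp (-(ρ - ρ₀) * t / s) - 1) := by
            have he : (ρ₀ - ρ) = -(ρ - ρ₀) := by ring
            rw [← he]
            apply mul_le_mul_of_nonneg_right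
            · exact Real.exp_le_exp.mpr ((div_le_div_iff_of_pos_right hs).mpr (by nlinarith))
            · have : (1:ℝ) ≤ Real.exp ((ρ₀ - ρ) * t / s) :=
                Real.one_le_exp (div_nonneg (mul_nonneg (by linarith) ht) hs.le)
              linarith


end AuxPointwise

/-- Proposition 3.1: existence and uniqueness of the maximum adjustment coefficient `ρ_n` of
the `n`-scaled Cramér–Lundberg model, as the unique `ρ > 0` solving
`c − λE[Y] = √n λ ∫₀^∞ (e^{ρ Ř(t;ρ)/√n} − 1) S_Y(t) dt`,
where `Ř(t;ρ) = t` for `0 ≤ t ≤ (√n/ρ) ln(1 + θ/√n)` and otherwise `Ř(t;ρ)` is the unique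
`r ∈ [0, t)` with `(√n + θ) + η(t − r) = √n e^{ρr/√n}`. -/
theorem scaled_adjustment_coefficient_exists_unique
    {Ω : Type*} [MeasurableSpace Ω] (μ : Measure Ω) [IsProbabilityMeasure μ]
    (Y : Ω → ℝ) (hYmeas : Measurable Y) (hYnonneg : ∀ ω, 0 ≤ Y ω)
    (hEY : 0 < ∫ ω, Y ω ∂μ) (hY2 : Integrable (fun ω => (Y ω) ^ 2) μ)
    (n lam θ η c : ℝ) (hn : 0 < n) (hlam : 0 < lam) (hθ : 0 ≤ θ) (hη : 0 < η)
    (hc1 : lam * ∫ ω, Y ω ∂μ < c)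
    (hc2 : c < (1 + θ) * lam * (∫ ω, Y ω ∂μ) + (η / 2) * lam * ∫ ω, (Y ω) ^ 2 ∂μ)
    (Rcheck : ℝ → ℝ → ℝ)
    (hRc1 : ∀ ρ : ℝ, 0 < ρ → ∀ t : ℝ, 0 ≤ t →
      t ≤ Real.sqrt n / ρ * Real.log (1 + θ / Real.sqrt n) → Rcheck t ρ = t)
    (hRc2 : ∀ ρ : ℝ, 0 < ρ → ∀ t : ℝ,
      Real.sqrt n / ρ * Real.log (1 + θ / Real.sqrt n) < t →
      0 ≤ Rcheck t ρ ∧ Rcheck t ρ < t ∧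
        (Real.sqrt n + θ) + η * (t - Rcheck t ρ)
          = Real.sqrt n * Real.exp (ρ * Rcheck t ρ / Real.sqrt n)) :
    ∃! ρ : ℝ, 0 < ρ ∧
      c - lam * ∫ ω, Y ω ∂μ
        = Real.sqrt n * lam * ∫ t in Set.Ioi (0 : ℝ),
            (Real.exp (ρ * Rcheck t ρ / Real.sqrt n) - 1) * (μ {ω | t < Y ω}).toReal := by
  have hs : 0 < Real.sqrt n := Real.sqrt_pos.mpr hn
  set s : ℝ := Real.sqrt n with hsdef
  set S : ℝ → ℝ := fun t => (μ {ω | t < Y ω}).toReal with hSdef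
  set E1 : ℝ := ∫ ω, Y ω ∂μ with hE1def
  set E2 : ℝ := ∫ ω, (Y ω) ^ 2 ∂μ with hE2def
  have hE2nn : 0 ≤ E2 := integral_nonneg fun ω => sq_nonneg _
  -- Y is integrable
  have hYint : Integrable Y μ := by
    have hb : Integrable (fun ω => Y ω ^ 2 + 1) μ := hY2.add (integrable_const 1)
    refine hb.mono' hYmeas.aestronglyMeasurable ?_
    filter_upwards with ω
    rw [Real.norm_eq_abs, abs_of_nonneg (hYnonneg ω)]
    nlinarith [sq_nonneg (Y ω - 1)]
  -- S is measurable, nonnegative, bounded by 1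
  have hSmeas : Measurable S := by
    apply Measurable.ennreal_toReal
    exact Antitone.measurable (fun _ _ hst => measure_mono fun _ h => lt_of_le_of_lt hst h)
  have hSnn : ∀ t, 0 ≤ S t := fun t => ENNReal.toReal_nonneg
  -- layer cake : ∫_{Ioi 0} S = E1
  have hS1 : ∫ t in Ioi 0, S t = E1 :=
    (hYint.integral_eq_integral_meas_lt (ae_of_all _ hYnonneg)).symm
  -- S is integrable on Ioi 0
  have hSofReal : ∀ t : ℝ, ENNReal.ofReal (S t) = μ {ω | t < Y ω} := fun t =>
    ENNReal.ofReal_toReal (measure_ne_top μ _)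
  have hSlin : ∫⁻ t in Ioi 0, ENNReal.ofReal (S t) = ∫⁻ ω, ENNReal.ofReal (Y ω) ∂μ := by
    rw [lintegral_eq_lintegral_meas_lt μ (ae_of_all _ hYnonneg) hYmeas.aemeasurable]
    exact lintegral_congr fun t => hSofReal t
  have hSint : IntegrableOn S (Ioi 0) := by
    refine ⟨hSmeas.aestronglyMeasurable, ?_⟩
    rw [hasFiniteIntegral_iff_ofReal (ae_of_all _ hSnn)]
    rw [hSlin]
    exact hYint.lintegral_lt_top
  -- weighted layer cake : ∫_{Ioi 0} t * S t = E2 / 2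
  have htS : IntegrableOn (fun t => t * S t) (Ioi 0) ∧
      ∫ t in Ioi 0, t * S t = E2 / 2 := by
    have hY2' : Integrable (fun ω => Y ω ^ 2 / 2) μ := hY2.div_const 2
    have hlay := lintegral_comp_eq_lintegral_meas_lt_mul μ (ae_of_all _ hYnonneg)
      hYmeas.aemeasurable (g := fun t => t)
      (fun t _ => intervalIntegral.intervalIntegrable_id)
      (by
        filter_upwards [ae_restrict_mem measurableSet_Ioi] with t ht
        exact le_of_lt ht)
    have hLHS : (∫⁻ ω, ENNReal.ofReal (∫ x in (0:ℝ)..Y ω, x) ∂μ)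
        = ENNReal.ofReal (E2 / 2) := by
      have hid : ∀ ω, (∫ x in (0:ℝ)..Y ω, x) = Y ω ^ 2 / 2 := by
        intro ω
        rw [integral_id]
        ring
      calc (∫⁻ ω, ENNReal.ofReal (∫ x in (0:ℝ)..Y ω, x) ∂μ)
          = ∫⁻ ω, ENNReal.ofReal (Y ω ^ 2 / 2) ∂μ :=
            lintegral_congr fun ω => by rw [hid]
        _ = ENNReal.ofReal (∫ ω, Y ω ^ 2 / 2 ∂μ) :=
            (ofReal_integral_eq_lintegral_ofReal hY2'
              (ae_of_all _ fun ω => by positivity)).symm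
        _ = ENNReal.ofReal (E2 / 2) := by rw [integral_div]
    have hRHS : (∫⁻ t in Ioi 0, μ {a | t < Y a} * ENNReal.ofReal t)
        = ∫⁻ t in Ioi (0:ℝ), ENNReal.ofReal (t * S t) := by
      apply setLIntegral_congr_fun measurableSet_Ioi
      intro t ht
      simp only [mem_Ioi] at ht
      dsimp only
      rw [ENNReal.ofReal_mul ht.le, ← hSofReal t, mul_comm]
    have hfin : (∫⁻ t in Ioi (0:ℝ), ENNReal.ofReal (t * S t)) < ⊤ := by
      rw [← hRHS, ← hlay, hLHS]
      exact ENNReal.ofReal_lt_top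
    have hm : AEMeasurable (fun t => t * S t) (volume.restrict (Ioi 0)) :=
      (measurable_id.mul hSmeas).aemeasurable
    have hnn : 0 ≤ᵐ[volume.restrict (Ioi 0)] fun t => t * S t := by
      filter_upwards [ae_restrict_mem measurableSet_Ioi] with t ht
      simp only [mem_Ioi] at ht
      exact mul_nonneg ht.le (hSnn t)
    have hint : IntegrableOn (fun t => t * S t) (Ioi 0) := by
      refine ⟨hm.aestronglyMeasurable, ?_⟩
      rw [hasFiniteIntegral_iff_ofReal hnn]
      exact hfin
    refine ⟨hint, ?_⟩
    rw [integral_eq_lintegral_of_nonneg_ae hnn hm.aestronglyMeasurable]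
    rw [← hRHS, ← hlay, hLHS, ENNReal.toReal_ofReal (div_nonneg hE2nn (by norm_num))]
  -- the function F
  set F : ℝ → ℝ := fun ρ => ∫ t in Ioi 0, (Real.exp (ρ * Rcheck t ρ / s) - 1) * S t
    with hFdef
  -- measurability of each integrand
  have hmeas : ∀ ρ : ℝ, 0 < ρ → AEStronglyMeasurable
      (fun t => (Real.exp (ρ * Rcheck t ρ / s) - 1) * S t) (volume.restrict (Ioi 0)) := by
    intro ρ hρ
    have hmono : Monotone (fun t => Real.exp (ρ * Rcheck (max t 0) ρ / s)) := by
      intro a b hab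
      exact aux_mono_t hs hθ hη hRc1 hRc2 hρ (le_max_right a 0) (le_max_right b 0)
        (max_le_max hab le_rfl)
    have h1 : AEMeasurable (fun t => Real.exp (ρ * Rcheck t ρ / s))
        (volume.restrict (Ioi 0)) := by
      refine hmono.measurable.aemeasurable.congr ?_
      filter_upwards [ae_restrict_mem measurableSet_Ioi] with t ht
      simp only [mem_Ioi] at ht
      rw [max_eq_left ht.le]
    exact ((h1.sub aemeasurable_const).mul hSmeas.aemeasurable).aestronglyMeasurable
  -- dominating function
  set Mb : ℝ → ℝ := fun t => (θ * S t + η * (t * S t)) / s with hMbdef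
  have hMbint : IntegrableOn Mb (Ioi 0) :=
    (((hSint.const_mul θ).add (htS.1.const_mul η)).div_const s)
  have hMbval : ∫ t in Ioi 0, Mb t = (θ * E1 + η * (E2 / 2)) / s := by
    rw [hMbdef]
    rw [integral_div]
    rw [integral_add (hSint.const_mul θ) (htS.1.const_mul η)]
    rw [integral_const_mul, integral_const_mul, hS1, htS.2]
  have hbound : ∀ ρ : ℝ, 0 < ρ → ∀ᵐ t ∂(volume.restrict (Ioi 0)),
      ‖(Real.exp (ρ * Rcheck t ρ / s) - 1) * S t‖ ≤ Mb t := by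
    intro ρ hρ
    filter_upwards [ae_restrict_mem measurableSet_Ioi] with t ht
    simp only [mem_Ioi] at ht
    obtain ⟨h1, h2, _⟩ := aux_bounds hs hθ hη hRc1 hRc2 hρ ht.le
    rw [Real.norm_eq_abs, abs_of_nonneg (mul_nonneg (by linarith) (hSnn t))]
    have : (Real.exp (ρ * Rcheck t ρ / s) - 1) * S t ≤ ((θ + η * t) / s) * S t :=
      mul_le_mul_of_nonneg_right (by linarith) (hSnn t)
    calc (Real.exp (ρ * Rcheck t ρ / s) - 1) * S t ≤ ((θ + η * t) / s) * S t := this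
      _ = Mb t := by rw [hMbdef]; ring
  -- integrability of integrands
  have hFint : ∀ ρ : ℝ, 0 < ρ → IntegrableOn
      (fun t => (Real.exp (ρ * Rcheck t ρ / s) - 1) * S t) (Ioi 0) := by
    intro ρ hρ
    exact Integrable.mono' hMbint (hmeas ρ hρ) (hbound ρ hρ)
  -- strict monotonicity of F
  have hFmono : ∀ ρ₁ ρ₂ : ℝ, 0 < ρ₁ → ρ₁ < ρ₂ → F ρ₁ < F ρ₂ := by
    intro ρ₁ ρ₂ h1 h12
    have h2 : 0 < ρ₂ := lt_trans h1 h12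
    have hdiffInt : IntegrableOn (fun t =>
        (Real.exp (ρ₂ * Rcheck t ρ₂ / s) - Real.exp (ρ₁ * Rcheck t ρ₁ / s)) * S t) (Ioi 0) := by
      have := (hFint ρ₂ h2).sub (hFint ρ₁ h1)
      refine this.congr ?_
      filter_upwards with t
      simp only [Pi.sub_apply]
      ring
    have hdiff : F ρ₂ - F ρ₁ = ∫ t in Ioi 0,
        (Real.exp (ρ₂ * Rcheck t ρ₂ / s) - Real.exp (ρ₁ * Rcheck t ρ₁ / s)) * S t := by
      rw [hFdef, ← integral_sub (hFint ρ₂ h2) (hFint ρ₁ h1)]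
      apply integral_congr_ae
      filter_upwards with t
      ring
    have hnn : 0 ≤ᵐ[volume.restrict (Ioi 0)] fun t =>
        (Real.exp (ρ₂ * Rcheck t ρ₂ / s) - Real.exp (ρ₁ * Rcheck t ρ₁ / s)) * S t := by
      filter_upwards [ae_restrict_mem measurableSet_Ioi] with t ht
      simp only [mem_Ioi] at ht
      exact mul_nonneg (by linarith [aux_smono_rho hs hθ hη hRc1 hRc2 h1 h12 ht]) (hSnn t)
    have hpos : 0 < F ρ₂ - F ρ₁ := by
      rw [hdiff]
      rcases (integral_nonneg_of_ae hnn).lt_or_eq with h | h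
      · exact h
      · exfalso
        have hzero := (integral_eq_zero_iff_of_nonneg_ae hnn hdiffInt).mp h.symm
        have hSzero : S =ᵐ[volume.restrict (Ioi 0)] 0 := by
          filter_upwards [hzero, ae_restrict_mem measurableSet_Ioi] with t h0 ht
          simp only [mem_Ioi] at ht
          simp only [Pi.zero_apply] at h0 ⊢
          have hgt := aux_smono_rho hs hθ hη hRc1 hRc2 h1 h12 ht
          rcases mul_eq_zero.mp h0 with h' | h'
          · linarith
          · exact h'
        have : ∫ t in Ioi 0, S t = 0 := by
          rw [integral_congr_ae hSzero]
          simp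
        rw [hS1] at this
        linarith [hEY]
    linarith
  -- continuity of F on (0, ∞)
  have hFcont : ContinuousOn F (Ioi 0) := by
    intro ρ₀ hρ₀
    simp only [mem_Ioi] at hρ₀
    show Tendsto F (nhdsWithin ρ₀ (Ioi 0)) (nhds (F ρ₀))
    apply tendsto_integral_filter_of_dominated_convergence Mb
    · filter_upwards [self_mem_nhdsWithin] with ρ hρ
      exact hmeas ρ hρ
    · filter_upwards [self_mem_nhdsWithin] with ρ hρ
      exact hbound ρ hρ
    · exact hMbint
    · filter_upwards [ae_restrict_mem measurableSet_Ioi] with t ht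
      simp only [mem_Ioi] at ht
      exact ((aux_cont hs hθ hη hRc1 hRc2 ht.le hρ₀).sub tendsto_const_nhds).mul
        tendsto_const_nhds
  -- F → 0 as ρ → 0⁺
  have hF0 : Tendsto F (nhdsWithin 0 (Ioi 0)) (nhds 0) := by
    have : Tendsto F (nhdsWithin 0 (Ioi 0)) (nhds (∫ _ in Ioi (0:ℝ), (0:ℝ))) := by
      apply tendsto_integral_filter_of_dominated_convergence Mb
      · filter_upwards [self_mem_nhdsWithin] with ρ hρ
        exact hmeas ρ hρ
      · filter_upwards [self_mem_nhdsWithin] with ρ hρ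
        exact hbound ρ hρ
      · exact hMbint
      · filter_upwards [ae_restrict_mem measurableSet_Ioi] with t ht
        simp only [mem_Ioi] at ht
        have := ((aux_tendsto_zero hs hθ hη hRc1 hRc2 ht.le).sub
          (tendsto_const_nhds (x := (1:ℝ)))).mul (tendsto_const_nhds (x := S t))
        simpa using this
    simpa using this
  -- F → L as ρ → ∞
  set L : ℝ := (θ * E1 + η * (E2 / 2)) / s with hLdef
  have hFtop : Tendsto F atTop (nhds L) := by
    have : Tendsto F atTop (nhds (∫ t in Ioi 0, Mb t)) := by
      apply tendsto_integral_filter_of_dominated_convergence Mb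
      · filter_upwards [eventually_gt_atTop (0:ℝ)] with ρ hρ
        exact hmeas ρ hρ
      · filter_upwards [eventually_gt_atTop (0:ℝ)] with ρ hρ
        exact hbound ρ hρ
      · exact hMbint
      · filter_upwards [ae_restrict_mem measurableSet_Ioi] with t ht
        simp only [mem_Ioi] at ht
        have := ((aux_tendsto_top hs hθ hη hRc1 hRc2 ht).sub
          (tendsto_const_nhds (x := (1:ℝ)))).mul (tendsto_const_nhds (x := S t))
        have heq : (1 + (θ + η * t) / s - 1) * S t = Mb t := by rw [hMbdef]; ring
        rw [heq] at this
        exact this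
    rwa [hMbval] at this
  -- target value
  set D : ℝ := (c - lam * E1) / (s * lam) with hDdef
  have hD0 : 0 < D := div_pos (by linarith) (by positivity)
  have hDL : D < L := by
    rw [hDdef, hLdef, div_lt_div_iff₀ (by positivity) hs]
    nlinarith [hc2]
  -- existence of a crossing
  have hlow : ∃ ρa : ℝ, 0 < ρa ∧ F ρa < D := by
    have hev : ∀ᶠ ρ in nhdsWithin 0 (Ioi 0), F ρ < D := hF0.eventually_lt_const hD0
    obtain ⟨ρa, hρa⟩ := (hev.and self_mem_nhdsWithin).exists
    exact ⟨ρa, hρa.2, hρa.1⟩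
  obtain ⟨ρa, hρa0, hFa⟩ := hlow
  have hhigh : ∃ ρb : ℝ, ρa < ρb ∧ D < F ρb := by
    have hev : ∀ᶠ ρ in atTop, D < F ρ := hFtop.eventually_const_lt hDL
    obtain ⟨ρb, hρb⟩ := (hev.and (eventually_gt_atTop ρa)).exists
    exact ⟨ρb, hρb.2, hρb.1⟩
  obtain ⟨ρb, hab, hFb⟩ := hhigh
  have hsub : Icc ρa ρb ⊆ Ioi 0 := fun x hx => lt_of_lt_of_le hρa0 hx.1
  have hicc : ContinuousOn F (Icc ρa ρb) := hFcont.mono hsub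
  have hD : D ∈ Icc (F ρa) (F ρb) := ⟨hFa.le, hFb.le⟩
  obtain ⟨ρ₀, hρ₀mem, hFρ₀⟩ := intermediate_value_Icc hab.le hicc hD
  have hρ₀pos : 0 < ρ₀ := lt_of_lt_of_le hρa0 hρ₀mem.1
  -- equation ↔ F ρ = D
  have hiff : ∀ ρ : ℝ, (c - lam * E1 = s * lam * F ρ) ↔ F ρ = D := by
    intro ρ
    rw [hDdef, eq_div_iff (by positivity : s * lam ≠ 0)]
    constructor
    · intro h; linarith
    · intro h; linarith
  refine ⟨ρ₀, ⟨hρ₀pos, ?_⟩, ?_⟩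
  · exact (hiff ρ₀).mpr hFρ₀
  · rintro ρ' ⟨hρ'pos, heq'⟩
    have hF' : F ρ' = D := (hiff ρ').mp heq'
    rcases lt_trichotomy ρ' ρ₀ with h | h | h
    · exact absurd (hFmono ρ' ρ₀ hρ'pos h) (by rw [hF', hFρ₀]; exact lt_irrefl D)
    · exact h
    · exact absurd (hFmono ρ₀ ρ' hρ₀pos h) (by rw [hF', hFρ₀]; exact lt_irrefl D)
end

section
/- Let θ > 0, η > 0, and y > 0. For each ρ > ln(1+θ)/y, let r(ρ) denote the unique solution in [0, y) of (1 + θ) + η(y − r) = e^{ρ r}. Then r(ρ) ∈ (0, y), the map ρ ↦ ρ r(ρ) is differentiable with derivative d/dρ (ρ r(ρ)) = η r(ρ) / (η + ρ e^{ρ r(ρ)}) > 0, and hence ρ ↦ ρ r(ρ) is strictly increasing. -/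
open Real Set

/-- Implicit-function monotonicity: for `θ, η, y > 0` and `ρ > ln(1+θ)/y`, if `r(ρ)` denotes
the unique solution in `[0, y)` of `(1 + θ) + η(y − r) = e^{ρr}`, then `r(ρ) ∈ (0, y)`,
the map `ρ ↦ ρ r(ρ)` has derivative `η r(ρ)/(η + ρ e^{ρ r(ρ)}) > 0` on `(ln(1+θ)/y, ∞)`,
and hence `ρ ↦ ρ r(ρ)` is strictly increasing there. -/
theorem implicit_retention_rho_r_strict_mono
    (θ η y : ℝ) (hθ : 0 < θ) (hη : 0 < η) (hy : 0 < y)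
    (r : ℝ → ℝ)
    (hr : ∀ ρ : ℝ, Real.log (1 + θ) / y < ρ →
      0 ≤ r ρ ∧ r ρ < y ∧ (1 + θ) + η * (y - r ρ) = Real.exp (ρ * r ρ)) :
    (∀ ρ : ℝ, Real.log (1 + θ) / y < ρ →
      r ρ ∈ Set.Ioo 0 y ∧
      HasDerivWithinAt (fun s : ℝ => s * r s)
        (η * r ρ / (η + ρ * Real.exp (ρ * r ρ)))
        (Set.Ioi (Real.log (1 + θ) / y)) ρ ∧
      0 < η * r ρ / (η + ρ * Real.exp (ρ * r ρ))) ∧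
    StrictMonoOn (fun s : ℝ => s * r s) (Set.Ioi (Real.log (1 + θ) / y)) := by
  set L := Real.log (1 + θ) / y with hLdef
  have hθ1 : (1:ℝ) < 1 + θ := by linarith
  have hlogθ : 0 < Real.log (1 + θ) := Real.log_pos hθ1
  have hLpos : 0 < L := div_pos hlogθ hy
  set A := 1 + θ + η * y with hAdef
  -- membership
  have hmem : ∀ ρ, L < ρ → r ρ ∈ Set.Ioo 0 y := by
    intro ρ hρ
    obtain ⟨h0, h1, heq⟩ := hr ρ hρ
    refine ⟨?_, h1⟩
    rcases h0.lt_or_eq with h | h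
    · exact h
    · exfalso
      rw [← h, mul_zero, Real.exp_zero] at heq
      nlinarith
  have hexpeq : ∀ ρ, L < ρ → Real.exp (ρ * r ρ) = A - η * r ρ := by
    intro ρ hρ
    have heq := (hr ρ hρ).2.2
    rw [← heq]; ring
  have hlogeq : ∀ ρ, L < ρ → ρ * r ρ = Real.log (A - η * r ρ) := by
    intro ρ hρ
    rw [← hexpeq ρ hρ, Real.log_exp]
  have hApos : ∀ t ∈ Set.Ioo 0 y, 1 + θ < A - η * t := by
    intro t ht
    have := ht.2
    nlinarith [ht.1]
  set F : ℝ → ℝ := fun t => Real.log (A - η * t) / t with hFdef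
  have hFanti : StrictAntiOn F (Set.Ioo 0 y) := by
    intro a ha b hb hab
    have h1 : Real.log (A - η * b) < Real.log (A - η * a) := by
      apply Real.log_lt_log (by nlinarith [hApos b hb])
      nlinarith [ha.1]
    have h2 : 0 < Real.log (A - η * a) :=
      Real.log_pos (by nlinarith [hApos a ha])
    exact div_lt_div₀ h1 hab.le h2.le ha.1
  have hFr : ∀ ρ, L < ρ → F (r ρ) = ρ := by
    intro ρ hρ
    have h0 := (hmem ρ hρ).1
    simp only [hFdef]
    rw [← hlogeq ρ hρ, mul_div_assoc, div_self (ne_of_gt h0), mul_one]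
  -- main pointwise statement
  have hmain : ∀ ρ : ℝ, L < ρ →
      r ρ ∈ Set.Ioo 0 y ∧
      HasDerivWithinAt (fun s : ℝ => s * r s)
        (η * r ρ / (η + ρ * Real.exp (ρ * r ρ))) (Set.Ioi L) ρ ∧
      0 < η * r ρ / (η + ρ * Real.exp (ρ * r ρ)) := by
    intro ρ hρ
    have hρ0 : 0 < ρ := lt_trans hLpos hρ
    obtain ⟨hr0, hry⟩ := hmem ρ hρ
    have hexp : Real.exp (ρ * r ρ) = A - η * r ρ := hexpeq ρ hρ
    have hEpos : 0 < A - η * r ρ := hexp ▸ Real.exp_pos _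
    have hden : 0 < η + ρ * (A - η * r ρ) := by positivity
    -- continuity of r at ρ
    have hcont : ContinuousAt r ρ := by
      rw [ContinuousAt, tendsto_order]
      constructor
      · intro a ha
        set a' := (max a 0 + r ρ) / 2 with ha'def
        have hma : max a 0 < r ρ := max_lt ha hr0
        have ha'1 : 0 < a' := by
          have := le_max_right a 0
          simp only [ha'def]; linarith
        have ha'2 : a' < r ρ := by simp only [ha'def]; linarith
        have ha'3 : a < a' := by
          have := le_max_left a 0
          simp only [ha'def]; linarith
        have ha'mem : a' ∈ Set.Ioo 0 y := ⟨ha'1, lt_trans ha'2 hry⟩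
        have hFa' : ρ < F a' := by
          rw [← hFr ρ hρ]
          exact hFanti ha'mem (hmem ρ hρ) ha'2
        filter_upwards [Ioo_mem_nhds hρ hFa'] with x hx
        by_contra h
        push_neg at h
        have hxmem := hmem x hx.1
        have hle : r x ≤ a' := le_trans h ha'3.le
        have : F a' ≤ F (r x) := (hFanti.le_iff_ge ha'mem hxmem).mpr hle
        rw [hFr x hx.1] at this
        exact absurd hx.2 (not_lt.mpr this)
      · intro b hb
        set b' := (r ρ + min b y) / 2 with hb'def
        have hmb : r ρ < min b y := lt_min hb hry
        have hb'1 : r ρ < b' := by simp only [hb'def]; linarith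
        have hb'2 : b' < y := by
          have := min_le_right b y
          simp only [hb'def]; linarith
        have hb'3 : b' < b := by
          have := min_le_left b y
          simp only [hb'def]; linarith
        have hb'mem : b' ∈ Set.Ioo 0 y := ⟨lt_trans hr0 hb'1, hb'2⟩
        have hFb' : F b' < ρ := by
          rw [← hFr ρ hρ]
          exact hFanti (hmem ρ hρ) hb'mem hb'1
        filter_upwards [Ioi_mem_nhds hFb', Ioi_mem_nhds hρ] with x hx1 hx2
        by_contra h
        push_neg at h
        have hxmem := hmem x hx2
        have hle : b' ≤ r x := le_trans hb'3.le h
        have : F (r x) ≤ F b' := (hFanti.le_iff_ge hxmem hb'mem).mpr hle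
        rw [hFr x hx2] at this
        exact absurd hx1 (not_lt.mpr this)
    -- derivative of F at r ρ
    have h1 : HasDerivAt (fun t : ℝ => A - η * t) (-η) (r ρ) := by
      simpa using ((hasDerivAt_id (r ρ)).const_mul η).const_sub A
    have h2 : HasDerivAt (fun t : ℝ => Real.log (A - η * t))
        (-η / (A - η * r ρ)) (r ρ) := h1.log (ne_of_gt hEpos)
    have h3 : HasDerivAt F
        ((-η / (A - η * r ρ) * r ρ - Real.log (A - η * r ρ) * 1) / (r ρ) ^ 2) (r ρ) :=
      h2.div (hasDerivAt_id (r ρ)) (ne_of_gt hr0)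
    set D := (-η / (A - η * r ρ) * r ρ - Real.log (A - η * r ρ) * 1) / (r ρ) ^ 2 with hDdef
    have hD : D = -((η + ρ * (A - η * r ρ)) / ((A - η * r ρ) * r ρ)) := by
      rw [hDdef, ← hlogeq ρ hρ]
      field_simp
      ring
    have hDne : D ≠ 0 := by
      rw [hD]
      exact neg_ne_zero.mpr (ne_of_gt (div_pos hden (mul_pos hEpos hr0)))
    have hev : ∀ᶠ x in nhds ρ, F (r x) = x := by
      filter_upwards [Ioi_mem_nhds hρ] with x hx using hFr x hx
    have hr' : HasDerivAt r D⁻¹ ρ :=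
      HasDerivAt.of_local_left_inverse hcont h3 hDne hev
    have hprod : HasDerivAt (fun s : ℝ => s * r s) (1 * r ρ + ρ * D⁻¹) ρ :=
      (hasDerivAt_id ρ).mul hr'
    have hDinv : D⁻¹ = -((A - η * r ρ) * r ρ / (η + ρ * (A - η * r ρ))) := by
      rw [hD, inv_neg, inv_div]
    have hval : 1 * r ρ + ρ * D⁻¹ = η * r ρ / (η + ρ * (A - η * r ρ)) := by
      rw [hDinv]
      linear_combination (-r ρ) * mul_inv_cancel₀ hden.ne'
    rw [hval] at hprod
    refine ⟨⟨hr0, hry⟩, ?_, ?_⟩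
    · rw [hexp]
      exact hprod.hasDerivWithinAt
    · rw [hexp]
      exact div_pos (mul_pos hη hr0) hden
  refine ⟨hmain, ?_⟩
  intro a ha b hb hab
  simp only [Set.mem_Ioi] at ha hb
  have hra := hmem a ha
  have hrb := hmem b hb
  have hFab : F (r a) < F (r b) := by rw [hFr a ha, hFr b hb]; exact hab
  have hrba : r b < r a := (hFanti.lt_iff_gt hra hrb).mp hFab
  show a * r a < b * r b
  rw [hlogeq a ha, hlogeq b hb]
  apply Real.log_lt_log
  · have := hApos (r a) hra; linarith
  · nlinarith
end

section
/- Let R be a nonnegative random variable with P(R > 0) > 0 and E[e^{tR}] < ∞ for all t ≥ 0, and let n > 0. Define g_n(ρ) = (1/ρ)(E[e^{ρR/√n}] − 1 − (ρ/√n) E[R]) for ρ > 0. Then g_n is strictly increasing on (0, ∞), lim_{ρ→0⁺} g_n(ρ) = 0, and lim_{ρ→∞} g_n(ρ) = ∞; consequently, for every A > 0 and λ > 0 there exists a unique ρ > 0 with n λ g_n(ρ) = A. -/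
open MeasureTheory Real Filter Set

set_option maxHeartbeats 2000000

private lemma phi_div_lt {a b r : ℝ} (ha : 0 < a) (hab : a < b) (hr : 0 < r) :
    (Real.exp (a*r) - 1 - a*r)/a < (Real.exp (b*r) - 1 - b*r)/b := by
  have hb : 0 < b := ha.trans hab
  have hslope : (Real.exp (a*r) - 1) / (a*r) < (Real.exp (b*r) - 1) / (b*r) := by
    have h := strictConvexOn_exp.secant_strict_mono (Set.mem_univ 0) (Set.mem_univ (a*r))
      (Set.mem_univ (b*r)) (mul_pos ha hr).ne' (mul_pos hb hr).ne'
      (mul_lt_mul_of_pos_right hab hr)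
    simpa [Real.exp_zero] using h
  have h2 := (div_lt_div_iff₀ (mul_pos ha hr) (mul_pos hb hr)).mp hslope
  rw [div_lt_div_iff₀ ha hb]
  nlinarith [h2, hr, mul_pos ha hb]

private lemma phi_le_aux {t : ℝ} (ht : 0 ≤ t) : Real.exp t - 1 - t ≤ t^2 * Real.exp t := by
  have h1 : Real.exp t * (1 - t) ≤ 1 := by
    have h := Real.add_one_le_exp (-t)
    have h2 : Real.exp t * Real.exp (-t) = 1 := by rw [← Real.exp_add]; simp
    nlinarith [Real.exp_pos t]
  have h3 : Real.exp t - 1 ≤ t * Real.exp t := by nlinarith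
  have h4 : t * (Real.exp t - 1) ≤ t * (t * Real.exp t) := mul_le_mul_of_nonneg_left h3 ht
  nlinarith [h4, h3]

private lemma quarter_sq_le_phi {t : ℝ} (ht : 0 ≤ t) : t^2/4 ≤ Real.exp t - 1 - t := by
  have h2 : 1 + t/2 ≤ Real.exp (t/2) := by linarith [Real.add_one_le_exp (t/2)]
  have h3 : Real.exp t = Real.exp (t/2) * Real.exp (t/2) := by rw [← Real.exp_add]; ring_nf
  nlinarith [h2, ht, h3]

private lemma phi_nonneg (t : ℝ) : 0 ≤ Real.exp t - 1 - t := by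
  linarith [Real.add_one_le_exp t]

/-- Properties of `g_n(ρ) = (1/ρ)(E[e^{ρR/√n}] − 1 − (ρ/√n)E[R])` for a nonnegative
random variable `R` with `P(R > 0) > 0` and all exponential moments finite:
`g_n` is strictly increasing on `(0,∞)`, `g_n(ρ) → 0` as `ρ → 0⁺`, `g_n(ρ) → ∞` as `ρ → ∞`;
consequently `nλ g_n(ρ) = A` has a unique positive root for every `A, λ > 0`. -/
theorem gn_monotone_limits_and_unique_root
    {Ω : Type*} [MeasurableSpace Ω] (μ : Measure Ω) [IsProbabilityMeasure μ]
    (R : Ω → ℝ) (hRmeas : Measurable R) (hRnonneg : ∀ ω, 0 ≤ R ω)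
    (hRpos : 0 < μ {ω | 0 < R ω})
    (hInt : ∀ t : ℝ, 0 ≤ t → Integrable (fun ω => Real.exp (t * R ω)) μ)
    (n : ℝ) (hn : 0 < n)
    (g : ℝ → ℝ)
    (hg : ∀ ρ : ℝ, 0 < ρ → g ρ
        = (1 / ρ) * ((∫ ω, Real.exp (ρ * R ω / Real.sqrt n) ∂μ) - 1
            - (ρ / Real.sqrt n) * ∫ ω, R ω ∂μ)) :
    StrictMonoOn g (Set.Ioi 0) ∧
    Filter.Tendsto g (nhdsWithin 0 (Set.Ioi 0)) (nhds 0) ∧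
    Filter.Tendsto g Filter.atTop Filter.atTop ∧
    ∀ A lam : ℝ, 0 < A → 0 < lam → ∃! ρ : ℝ, 0 < ρ ∧ n * lam * g ρ = A := by
  have hsqrt : 0 < Real.sqrt n := Real.sqrt_pos.mpr hn
  set s : ℝ := (Real.sqrt n)⁻¹ with hs_def
  have hs : 0 < s := inv_pos.mpr hsqrt
  -- integrability facts
  have hIntR : Integrable R μ := by
    refine (hInt 1 zero_le_one).mono hRmeas.aestronglyMeasurable ?_
    filter_upwards with ω
    rw [Real.norm_eq_abs, Real.norm_eq_abs, abs_of_nonneg (hRnonneg ω),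
      abs_of_nonneg (Real.exp_pos _).le, one_mul]
    linarith [Real.add_one_le_exp (R ω)]
  have hIntexp : ∀ c : ℝ, 0 ≤ c → Integrable (fun ω => Real.exp (c * (s * R ω))) μ := by
    intro c hc
    have := hInt (c*s) (mul_nonneg hc hs.le)
    simpa [mul_assoc] using this
  have hIntφ : ∀ a : ℝ, 0 ≤ a →
      Integrable (fun ω => Real.exp (a * (s * R ω)) - 1 - a * (s * R ω)) μ := by
    intro a ha
    refine ((hIntexp a ha).sub (integrable_const 1)).sub ?_
    have := hIntR.const_mul (a*s)
    simpa [mul_assoc] using this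
  -- the basic formula for g
  have hgρ : ∀ a : ℝ, 0 < a →
      g a = ∫ ω, (Real.exp (a * (s * R ω)) - 1 - a * (s * R ω)) / a ∂μ := by
    intro a ha
    rw [hg a ha]
    have h1 : ∫ ω, Real.exp (a * R ω / Real.sqrt n) ∂μ
        = ∫ ω, Real.exp (a * (s * R ω)) ∂μ := by
      refine integral_congr_ae (Eventually.of_forall fun ω => ?_)
      show Real.exp (a * R ω / Real.sqrt n) = Real.exp (a * (s * R ω))
      rw [show a * R ω / Real.sqrt n = a * (s * R ω) from by
        rw [hs_def, div_eq_mul_inv]; ring]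
    have h2 : ∫ ω, (Real.exp (a * (s * R ω)) - 1 - a * (s * R ω)) ∂μ
        = (∫ ω, Real.exp (a * (s * R ω)) ∂μ) - 1 - a * (s * ∫ ω, R ω ∂μ) := by
      have iE := hIntexp a ha.le
      have iR : Integrable (fun ω => a * (s * R ω)) μ := by
        simpa [mul_assoc] using hIntR.const_mul (a*s)
      have i1 : Integrable (fun ω => Real.exp (a * (s * R ω)) - 1) μ :=
        iE.sub (integrable_const 1)
      have e1 : ∫ ω, (Real.exp (a * (s * R ω)) - 1 - a * (s * R ω)) ∂μ
          = (∫ ω, (Real.exp (a * (s * R ω)) - 1) ∂μ) - ∫ ω, a * (s * R ω) ∂μ :=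
        integral_sub i1 iR
      have e2 : ∫ ω, (Real.exp (a * (s * R ω)) - 1) ∂μ
          = (∫ ω, Real.exp (a * (s * R ω)) ∂μ) - 1 := by
        rw [integral_sub iE (integrable_const 1), integral_const]
        simp
      have e3 : ∫ ω, a * (s * R ω) ∂μ = a * (s * ∫ ω, R ω ∂μ) := by
        rw [integral_const_mul, integral_const_mul]
      rw [e1, e2, e3]
    rw [h1, integral_div, h2, div_eq_mul_inv a, ← hs_def]
    ring
  -- strict monotonicity
  have hmono : StrictMonoOn g (Set.Ioi 0) := by
    intro a ha b hb hab
    rw [Set.mem_Ioi] at ha hb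
    have hint_a := (hIntφ a ha.le).div_const a
    have hint_b := (hIntφ b hb.le).div_const b
    have hpt : ∀ ω, 0 ≤ (Real.exp (b * (s * R ω)) - 1 - b * (s * R ω))/b
        - (Real.exp (a * (s * R ω)) - 1 - a * (s * R ω))/a := by
      intro ω
      rcases (hRnonneg ω).eq_or_lt with h|h
      · simp [← h]
      · linarith [phi_div_lt ha hab (mul_pos hs h)]
    have key : 0 < ∫ ω, ((Real.exp (b * (s * R ω)) - 1 - b * (s * R ω))/b
        - (Real.exp (a * (s * R ω)) - 1 - a * (s * R ω))/a) ∂μ := by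
      rw [integral_pos_iff_support_of_nonneg hpt (hint_b.sub hint_a)]
      refine lt_of_lt_of_le hRpos (measure_mono fun ω hω => ?_)
      rw [Set.mem_setOf_eq] at hω
      have hlt := phi_div_lt ha hab (mul_pos hs hω)
      simp only [Function.mem_support]
      intro hc
      rw [sub_eq_zero] at hc
      exact absurd hc.symm (ne_of_lt hlt)
    have hdiff : g b - g a = ∫ ω, ((Real.exp (b * (s * R ω)) - 1 - b * (s * R ω))/b
        - (Real.exp (a * (s * R ω)) - 1 - a * (s * R ω))/a) ∂μ := by
      rw [hgρ a ha, hgρ b hb, ← integral_sub hint_b hint_a]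
    linarith
  -- positivity of E[R^2]
  have hIntR2exp : Integrable (fun ω => (R ω)^2 * Real.exp (s * R ω)) μ := by
    refine ((hInt (1+s) (by positivity)).const_mul 4).mono
      (((hRmeas.pow_const 2).mul ((measurable_const.mul hRmeas).exp)).aestronglyMeasurable) ?_
    filter_upwards with ω
    have hx := hRnonneg ω
    have h2 : R ω / 2 + 1 ≤ Real.exp (R ω / 2) := Real.add_one_le_exp _
    have h3 : Real.exp (R ω) = Real.exp (R ω/2) * Real.exp (R ω/2) := by
      rw [← Real.exp_add]; ring_nf
    have h1 : (R ω)^2 / 4 ≤ Real.exp (R ω) := by nlinarith [Real.exp_pos (R ω / 2)]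
    rw [Real.norm_eq_abs, Real.norm_eq_abs, abs_of_nonneg (by positivity),
      abs_of_nonneg (by positivity)]
    have h4 : Real.exp ((1+s) * R ω) = Real.exp (R ω) * Real.exp (s * R ω) := by
      rw [← Real.exp_add]; ring_nf
    rw [h4]
    nlinarith [Real.exp_pos (s * R ω), h1]
  have hIntR2 : Integrable (fun ω => (R ω)^2) μ := by
    refine hIntR2exp.mono (hRmeas.pow_const 2).aestronglyMeasurable ?_
    filter_upwards with ω
    have h1 : (1:ℝ) ≤ Real.exp (s * R ω) :=
      Real.one_le_exp (mul_nonneg hs.le (hRnonneg ω))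
    rw [Real.norm_eq_abs, Real.norm_eq_abs, abs_of_nonneg (by positivity),
      abs_of_nonneg (by positivity)]
    nlinarith [sq_nonneg (R ω)]
  have hR2pos : 0 < ∫ ω, (R ω)^2 ∂μ := by
    rw [integral_pos_iff_support_of_nonneg (fun ω => sq_nonneg _) hIntR2]
    refine lt_of_lt_of_le hRpos (measure_mono fun ω hω => ?_)
    rw [Set.mem_setOf_eq] at hω
    simp only [Function.mem_support]
    positivity
  -- limit at 0+
  have h0 : Tendsto g (nhdsWithin 0 (Set.Ioi 0)) (nhds 0) := by
    set C := ∫ ω, s^2 * ((R ω)^2 * Real.exp (s * R ω)) ∂μ with hC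
    have hg0 : ∀ ρ : ℝ, 0 < ρ → 0 ≤ g ρ := by
      intro ρ hρ
      rw [hgρ ρ hρ]
      refine integral_nonneg fun ω => ?_
      exact div_nonneg (phi_nonneg _) hρ.le
    have hub : ∀ ρ ∈ Set.Ioc (0:ℝ) 1, g ρ ≤ ρ * C := by
      rintro ρ ⟨hρ0, hρ1⟩
      rw [hgρ ρ hρ0]
      have hle : ∀ ω, (Real.exp (ρ * (s * R ω)) - 1 - ρ * (s * R ω))/ρ
          ≤ ρ * (s^2 * ((R ω)^2 * Real.exp (s * R ω))) := by
        intro ω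
        have hr : 0 ≤ s * R ω := mul_nonneg hs.le (hRnonneg ω)
        have ht0 : 0 ≤ ρ * (s * R ω) := mul_nonneg hρ0.le hr
        have h1 := phi_le_aux ht0
        have h2 : Real.exp (ρ * (s * R ω)) ≤ Real.exp (s * R ω) := by
          apply Real.exp_le_exp.mpr
          nlinarith
        rw [div_le_iff₀ hρ0]
        nlinarith [Real.exp_pos (ρ * (s * R ω)), sq_nonneg (s * R ω),
          mul_nonneg (mul_nonneg ht0 ht0) (Real.exp_pos (ρ * (s * R ω))).le]
      calc ∫ ω, (Real.exp (ρ * (s * R ω)) - 1 - ρ * (s * R ω))/ρ ∂μ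
          ≤ ∫ ω, ρ * (s^2 * ((R ω)^2 * Real.exp (s * R ω))) ∂μ :=
            integral_mono ((hIntφ ρ hρ0.le).div_const ρ)
              ((hIntR2exp.const_mul (s^2)).const_mul ρ) hle
        _ = ρ * C := by rw [integral_const_mul]
    have h1 : Tendsto (fun ρ : ℝ => ρ * C) (nhdsWithin 0 (Set.Ioi 0)) (nhds 0) := by
      have h := (tendsto_id.mul_const C : Tendsto (fun ρ:ℝ => ρ * C) (nhds 0) (nhds (0 * C)))
      rw [zero_mul] at h
      exact h.mono_left nhdsWithin_le_nhds
    refine tendsto_of_tendsto_of_tendsto_of_le_of_le' tendsto_const_nhds h1 ?_ ?_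
    · filter_upwards [self_mem_nhdsWithin] with ρ hρ
      exact hg0 ρ hρ
    · filter_upwards [Ioc_mem_nhdsGT_of_mem (by norm_num : (0:ℝ) ∈ Set.Ico (0:ℝ) 1)] with ρ hρ
      exact hub ρ hρ
  -- limit at ∞
  have htop : Tendsto g atTop atTop := by
    set c : ℝ := s^2/4 * ∫ ω, (R ω)^2 ∂μ with hc_def
    have hc : 0 < c := mul_pos (by positivity) hR2pos
    refine tendsto_atTop_mono' atTop ?_ (tendsto_id.atTop_mul_const hc)
    filter_upwards [eventually_gt_atTop (0:ℝ)] with ρ hρ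
    have hle : ∀ ω, ρ * (s^2/4 * (R ω)^2)
        ≤ (Real.exp (ρ * (s * R ω)) - 1 - ρ * (s * R ω))/ρ := by
      intro ω
      have hr : 0 ≤ s * R ω := mul_nonneg hs.le (hRnonneg ω)
      have ht0 : 0 ≤ ρ * (s * R ω) := mul_nonneg hρ.le hr
      have h1 := quarter_sq_le_phi ht0
      rw [le_div_iff₀ hρ]
      nlinarith [sq_nonneg (R ω)]
    have : ρ * c ≤ g ρ := by
      rw [hgρ ρ hρ, hc_def]
      calc ρ * (s^2/4 * ∫ ω, (R ω)^2 ∂μ)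
          = ∫ ω, ρ * (s^2/4 * (R ω)^2) ∂μ := by
            rw [integral_const_mul, integral_const_mul]
        _ ≤ _ := integral_mono ((hIntR2.const_mul (s^2/4)).const_mul ρ)
              ((hIntφ ρ hρ.le).div_const ρ) hle
    simpa using this
  -- continuity on (0, ∞)
  have hcont : ContinuousOn g (Set.Ioi 0) := by
    intro ρ₀ hρ₀
    rw [Set.mem_Ioi] at hρ₀
    apply ContinuousAt.continuousWithinAt
    have hM : ContinuousAt (fun ρ => ∫ ω, Real.exp (ρ * R ω / Real.sqrt n) ∂μ) ρ₀ := by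
      apply continuousAt_of_dominated (bound := fun ω => Real.exp ((ρ₀+1) * s * R ω))
      · filter_upwards with ρ
        exact (((measurable_const.mul hRmeas).div_const _).exp).aestronglyMeasurable
      · filter_upwards [eventually_lt_nhds (lt_add_one ρ₀)] with ρ hρ
        refine Eventually.of_forall fun ω => ?_
        rw [Real.norm_eq_abs, abs_of_nonneg (Real.exp_pos _).le]
        apply Real.exp_le_exp.mpr
        rw [div_eq_mul_inv, ← hs_def]
        nlinarith [mul_nonneg hs.le (hRnonneg ω)]
      · exact hInt ((ρ₀+1)*s) (mul_nonneg (by linarith) hs.le)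
      · refine Eventually.of_forall fun ω => ?_
        exact (Real.continuous_exp.comp
          ((continuous_id.mul continuous_const).div_const _)).continuousAt
    have heq : g =ᶠ[nhds ρ₀] fun ρ => (1/ρ) * ((∫ ω, Real.exp (ρ * R ω / Real.sqrt n) ∂μ) - 1
        - (ρ / Real.sqrt n) * ∫ ω, R ω ∂μ) := by
      filter_upwards [Ioi_mem_nhds hρ₀] with ρ hρ
      exact hg ρ hρ
    rw [continuousAt_congr heq]
    refine ContinuousAt.mul ?_ ?_
    · exact continuousAt_const.div continuousAt_id (ne_of_gt hρ₀)
    · exact (hM.sub continuousAt_const).sub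
        ((continuousAt_id.div_const _).mul continuousAt_const)
  refine ⟨hmono, h0, htop, ?_⟩
  intro A lam hA hlam
  have hnl : 0 < n * lam := mul_pos hn hlam
  obtain ⟨a, haA, ha0⟩ : ∃ a : ℝ, n * lam * g a < A ∧ a ∈ Set.Ioi (0:ℝ) := by
    have hG : Tendsto (fun ρ => n * lam * g ρ) (nhdsWithin 0 (Set.Ioi 0)) (nhds (n*lam*0)) :=
      h0.const_mul _
    rw [mul_zero] at hG
    exact ((hG.eventually_lt_const hA).and self_mem_nhdsWithin).exists
  rw [Set.mem_Ioi] at ha0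
  obtain ⟨b, hbA, hab⟩ : ∃ b : ℝ, A < n * lam * g b ∧ a ≤ b := by
    have h1 : Tendsto (fun ρ => n * lam * g ρ) atTop atTop := htop.const_mul_atTop hnl
    exact ((h1.eventually_gt_atTop A).and (eventually_ge_atTop a)).exists
  have hIcc : Set.Icc a b ⊆ Set.Ioi 0 := fun x hx => lt_of_lt_of_le ha0 hx.1
  have hGc : ContinuousOn (fun ρ => n * lam * g ρ) (Set.Icc a b) :=
    continuousOn_const.mul (hcont.mono hIcc)
  obtain ⟨ρ, hρmem, hρeq⟩ := intermediate_value_Icc hab hGc ⟨le_of_lt haA, le_of_lt hbA⟩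
  have hρ0 : 0 < ρ := lt_of_lt_of_le ha0 hρmem.1
  refine ⟨ρ, ⟨hρ0, hρeq⟩, ?_⟩
  rintro y ⟨hy0, hyeq⟩
  have hgy : g y = g ρ := mul_left_cancel₀ hnl.ne' (hyeq.trans hρeq.symm)
  exact hmono.injOn (Set.mem_Ioi.mpr hy0) (Set.mem_Ioi.mpr hρ0) hgy
end

section
/- Let R be a nonnegative random variable with P(R > 0) > 0, E[R²] < ∞, and E[e^{tR}] < ∞ for all t ≥ 0; let n > 0, λ > 0, and A > 0. Suppose ρ_n > 0 satisfies (nλ/ρ_n)(E[e^{ρ_n R/√n}] − 1 − (ρ_n/√n) E[R]) = A, and define ρ_D = 2A/(λE[R²]). Then ρ_n < ρ_D. -/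
open MeasureTheory Real Set

/-- Strict quadratic bound: for `x > 0`, `1 + x + x^2/2 < exp x`. -/
lemma quadratic_lt_exp_of_pos {x : ℝ} (hx : 0 < x) : 1 + x + x ^ 2 / 2 < Real.exp x := by
  have h := Real.sum_le_exp_of_nonneg hx.le 4
  have hsum : (∑ i ∈ Finset.range 4, x ^ i / (Nat.factorial i)) =
      1 + x + x ^ 2 / 2 + x ^ 3 / 6 := by
    rw [Finset.sum_range_succ, Finset.sum_range_succ, Finset.sum_range_succ,
      Finset.sum_range_succ, Finset.sum_range_zero]
    norm_num [Nat.factorial]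
  nlinarith [pow_pos hx 3]

/-- Lemma 3.1: for a nonnegative random variable `R` with `P(R > 0) > 0`, finite second
moment, and all exponential moments finite, if `ρ_n > 0` satisfies
`(nλ/ρ_n)(E[e^{ρ_n R/√n}] − 1 − (ρ_n/√n)E[R]) = A` and `ρ_D = 2A/(λE[R²])`, then
`ρ_n < ρ_D`. -/
theorem scaled_adjustment_lt_diffusion_adjustment
    {Ω : Type*} [MeasurableSpace Ω] (μ : Measure Ω) [IsProbabilityMeasure μ]
    (R : Ω → ℝ) (hRmeas : Measurable R) (hRnonneg : ∀ ω, 0 ≤ R ω)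
    (hRpos : 0 < μ {ω | 0 < R ω})
    (hR2 : Integrable (fun ω => (R ω) ^ 2) μ)
    (hInt : ∀ t : ℝ, 0 ≤ t → Integrable (fun ω => Real.exp (t * R ω)) μ)
    (n lam A : ℝ) (hn : 0 < n) (hlam : 0 < lam) (hA : 0 < A)
    (ρn : ℝ) (hρn : 0 < ρn)
    (heq : (n * lam / ρn) * ((∫ ω, Real.exp (ρn * R ω / Real.sqrt n) ∂μ) - 1
        - (ρn / Real.sqrt n) * ∫ ω, R ω ∂μ) = A)
    (ρD : ℝ) (hρD : ρD = 2 * A / (lam * ∫ ω, (R ω) ^ 2 ∂μ)) :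
    ρn < ρD := by
  have hsn : 0 < Real.sqrt n := Real.sqrt_pos.mpr hn
  set c : ℝ := ρn / Real.sqrt n with hc
  have hcpos : 0 < c := div_pos hρn hsn
  -- R is integrable
  have hR1 : Integrable R μ := by
    refine (hR2.add (integrable_const 1)).mono (hRmeas.aestronglyMeasurable) ?_
    filter_upwards with ω
    have h0 := hRnonneg ω
    simp only [Pi.add_apply, Real.norm_eq_abs, abs_of_nonneg h0]
    have hb : R ω ≤ R ω ^ 2 + 1 := by nlinarith [sq_nonneg (R ω - 1)]
    exact hb.trans (le_abs_self _)
  have hExp : Integrable (fun ω => Real.exp (c * R ω)) μ := hInt c hcpos.le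
  -- the function h ω = exp(cR) - 1 - cR - (cR)^2/2 is nonneg, positive iff R > 0
  set h : Ω → ℝ := fun ω => Real.exp (c * R ω) - 1 - c * R ω - (c * R ω) ^ 2 / 2 with hh
  have hnn : ∀ ω, 0 ≤ h ω := by
    intro ω
    have := Real.quadratic_le_exp_of_nonneg (mul_nonneg hcpos.le (hRnonneg ω))
    simp only [hh]; linarith
  have hInth : Integrable h μ := by
    have : h = fun ω => Real.exp (c * R ω) - 1 - c * R ω - c ^ 2 / 2 * R ω ^ 2 := by
      funext ω; simp only [hh]; ring
    rw [this]
    exact ((hExp.sub (integrable_const 1)).sub (hR1.const_mul c)).sub (hR2.const_mul _)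
  -- positivity of ∫ h
  have hpos : 0 < ∫ ω, h ω ∂μ := by
    rw [integral_pos_iff_support_of_nonneg hnn hInth]
    refine lt_of_lt_of_le hRpos (measure_mono ?_)
    intro ω hω
    have hRω : 0 < R ω := hω
    have hx : 0 < c * R ω := mul_pos hcpos hRω
    have := quadratic_lt_exp_of_pos hx
    simp only [Function.mem_support, hh]
    intro habs; linarith [habs.ge, habs.le]
  -- positivity of ∫ R²
  have hR2pos : 0 < ∫ ω, (R ω) ^ 2 ∂μ := by
    rw [integral_pos_iff_support_of_nonneg (fun ω => sq_nonneg (R ω)) hR2]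
    refine lt_of_lt_of_le hRpos (measure_mono ?_)
    intro ω hω
    have : 0 < R ω := hω
    simp only [Function.mem_support]
    positivity
  -- rewrite heq in terms of ∫ h
  have hsplit : (∫ ω, Real.exp (ρn * R ω / Real.sqrt n) ∂μ) - 1
      - (ρn / Real.sqrt n) * ∫ ω, R ω ∂μ
      = (∫ ω, h ω ∂μ) + c ^ 2 / 2 * ∫ ω, (R ω) ^ 2 ∂μ := by
    have he : ∀ ω, Real.exp (ρn * R ω / Real.sqrt n) = Real.exp (c * R ω) := by
      intro ω; rw [hc]; ring_nf
    simp only [he]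
    have h1 : ∫ ω, h ω ∂μ = (∫ ω, Real.exp (c * R ω) ∂μ) - 1 - c * (∫ ω, R ω ∂μ)
        - c ^ 2 / 2 * ∫ ω, (R ω) ^ 2 ∂μ := by
      have : h = fun ω => Real.exp (c * R ω) - 1 - c * R ω - c ^ 2 / 2 * R ω ^ 2 := by
        funext ω; simp only [hh]; ring
      have i1 : Integrable (fun ω => Real.exp (c * R ω) - 1) μ := by
        exact hExp.sub (integrable_const 1)
      have i2 : Integrable (fun ω => Real.exp (c * R ω) - 1 - c * R ω) μ := by
        exact i1.sub (hR1.const_mul c)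
      have i3 : Integrable (fun ω => c ^ 2 / 2 * R ω ^ 2) μ := by
        exact hR2.const_mul _
      have i4 : Integrable (fun ω => c * R ω) μ := by exact hR1.const_mul c
      rw [this, integral_sub i2 i3, integral_sub i1 i4,
        integral_sub hExp (integrable_const 1), integral_const_mul, integral_const_mul]
      simp
    rw [h1, hc]; ring
  -- main estimate: A > lam * ρn / 2 * ∫ R²
  have hkey : lam * ρn / 2 * (∫ ω, (R ω) ^ 2 ∂μ) < A := by
    rw [← heq, hsplit]
    have hcoef : 0 < n * lam / ρn := div_pos (mul_pos hn hlam) hρn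
    have hc2 : c ^ 2 = ρn ^ 2 / n := by
      rw [hc, div_pow, Real.sq_sqrt hn.le]
    have : n * lam / ρn * (c ^ 2 / 2 * ∫ ω, (R ω) ^ 2 ∂μ)
        = lam * ρn / 2 * (∫ ω, (R ω) ^ 2 ∂μ) := by
      rw [hc2]; field_simp
    nlinarith [mul_pos hcoef hpos]
  -- conclude
  rw [hρD, lt_div_iff₀ (mul_pos hlam hR2pos)]
  nlinarith
end

section
/- Let Y be a nonnegative random variable with a continuous probability density function f on [0,∞) and survival function S(y) = P(Y > y) satisfying S(y) > 0 for all y ≥ 0. Suppose the hazard rate h(y) = f(y)/S(y) satisfies lim_{y→∞} h(y) = ℓ with ℓ > 0, and let a ∈ (0, ℓ) be such that E[e^{aY}] < ∞. Then lim_{d→∞} ( ∫_d^∞ e^{ay} f(y) dy ) / ( e^{ad} S(d) ) = ℓ/(ℓ − a). -/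
open MeasureTheory Real Filter Set

/-- The L'Hôpital limit in the proof of Proposition 4.4: if `Y ≥ 0` has a continuous density
`f` on `[0,∞)` with everywhere positive survival function `S`, the hazard rate
`h(y) = f(y)/S(y)` tends to `ℓ > 0` at infinity, and `0 < a < ℓ` with `E[e^{aY}] < ∞`, then
`(∫_d^∞ e^{ay} f(y) dy)/(e^{ad} S(d)) → ℓ/(ℓ − a)` as `d → ∞`. -/
theorem hazard_rate_limit_conditional_exp_moment
    {Ω : Type*} [MeasurableSpace Ω] (μ : Measure Ω) [IsProbabilityMeasure μ]
    (Y : Ω → ℝ) (hYmeas : Measurable Y) (hYnonneg : ∀ ω, 0 ≤ Y ω)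
    (f : ℝ → ℝ) (hfcont : ContinuousOn f (Set.Ici 0)) (hfnonneg : ∀ y, 0 ≤ f y)
    (hdens : ∀ d : ℝ, 0 ≤ d →
      (μ {ω | d < Y ω}).toReal = ∫ y in Set.Ioi d, f y)
    (hSpos : ∀ d : ℝ, 0 ≤ d → 0 < (μ {ω | d < Y ω}).toReal)
    (ℓ : ℝ) (hℓ : 0 < ℓ)
    (hhaz : Filter.Tendsto (fun y : ℝ => f y / (μ {ω | y < Y ω}).toReal)
        Filter.atTop (nhds ℓ))
    (a : ℝ) (ha0 : 0 < a) (haℓ : a < ℓ)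
    (hexp : Integrable (fun ω => Real.exp (a * Y ω)) μ) :
    Filter.Tendsto
      (fun d : ℝ => (∫ y in Set.Ioi d, Real.exp (a * y) * f y)
          / (Real.exp (a * d) * (μ {ω | d < Y ω}).toReal))
      Filter.atTop (nhds (ℓ / (ℓ - a))) := by
  set S : ℝ → ℝ := fun d => (μ {ω | d < Y ω}).toReal with hS
  set E : ℝ → ℝ := fun y => Real.exp (a * y) * f y with hE
  set N : ℝ → ℝ := fun d => ∫ y in Set.Ioi d, E y with hN
  have hdensS : ∀ d : ℝ, 0 ≤ d → S d = ∫ y in Set.Ioi d, f y := hdens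
  -- basic integrability of f
  have hf_int : IntegrableOn f (Set.Ioi (0:ℝ)) := by
    by_contra h
    have := hdens 0 le_rfl
    rw [integral_undef h] at this
    exact absurd this (ne_of_gt (hSpos 0 le_rfl))
  -- continuity of E on Ici 0
  have hEcont : ContinuousOn E (Set.Ici 0) :=
    (Real.continuous_exp.comp (continuous_const.mul continuous_id)).continuousOn.mul hfcont
  have hEnonneg : ∀ y, 0 ≤ E y := fun y => mul_nonneg (Real.exp_pos _).le (hfnonneg y)
  -- set b between a and ℓ
  set b : ℝ := (a + ℓ) / 2 with hb
  have hab : a < b := by simp only [hb]; linarith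
  have hbl : b < ℓ := by simp only [hb]; linarith
  have hb0 : 0 < b := lt_trans ha0 hab
  -- choose Y0 ≥ 1 past which the hazard rate is between b and ℓ+1
  obtain ⟨Y0, hY0⟩ : ∃ Y0 : ℝ, 1 ≤ Y0 ∧ ∀ y ≥ Y0, b < f y / S y ∧ f y / S y < ℓ + 1 := by
    have h1 : ∀ᶠ y in atTop, b < f y / S y := hhaz.eventually (eventually_gt_nhds hbl)
    have h2 : ∀ᶠ y in atTop, f y / S y < ℓ + 1 :=
      hhaz.eventually (eventually_lt_nhds (by linarith))
    have h3 : ∀ᶠ y : ℝ in atTop, 1 ≤ y := eventually_ge_atTop 1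
    rcases eventually_atTop.mp ((h3.and h1).and h2) with ⟨Y0, hY0⟩
    exact ⟨max Y0 1, le_max_right _ _, fun y hy =>
      ⟨((hY0 y (le_trans (le_max_left _ _) hy)).1).2, (hY0 y (le_trans (le_max_left _ _) hy)).2⟩⟩
  obtain ⟨hY01, hY0h⟩ := hY0
  have hY00 : (0:ℝ) < Y0 := lt_of_lt_of_le zero_lt_one hY01
  have hSy : ∀ y : ℝ, 0 ≤ y → 0 < S y := fun y hy => hSpos y hy
  -- on [Y0, ∞): b * S y < f y and f y < (ℓ+1) * S y
  have hflb : ∀ y ≥ Y0, b * S y < f y := by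
    intro y hy
    have hSpos' := hSy y (le_trans hY00.le hy)
    have := (hY0h y hy).1
    exact (lt_div_iff₀ hSpos').mp this
  have hfub : ∀ y ≥ Y0, f y < (ℓ + 1) * S y := by
    intro y hy
    have hSpos' := hSy y (le_trans hY00.le hy)
    exact (div_lt_iff₀ hSpos').mp (hY0h y hy).2
  -- tail representation of S
  have htailS : ∀ c d : ℝ, 0 ≤ c → c ≤ d → S d = S c - ∫ y in c..d, f y := by
    intro c d hc hcd
    have hsplit : Set.Ioc c d ∪ Set.Ioi d = Set.Ioi c := Set.Ioc_union_Ioi_eq_Ioi hcd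
    have hint1 : IntegrableOn f (Set.Ioc c d) :=
      hf_int.mono_set (fun x hx => lt_of_le_of_lt hc hx.1)
    have hint2 : IntegrableOn f (Set.Ioi d) :=
      hf_int.mono_set (fun x hx => lt_of_le_of_lt (le_trans hc hcd) hx)
    have := MeasureTheory.setIntegral_union (Set.Ioc_disjoint_Ioi le_rfl)
      measurableSet_Ioi hint1 hint2
    rw [hsplit] at this
    rw [hdensS d (le_trans hc hcd), hdensS c hc,
      intervalIntegral.integral_of_le hcd, this]
    ring
  -- derivative of S
  have hSderiv : ∀ d : ℝ, 0 < d → HasDerivAt S (-(f d)) d := by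
    intro d hd
    have hii : IntervalIntegrable f volume 0 d :=
      (intervalIntegrable_iff_integrableOn_Ioc_of_le hd.le).mpr
        (hf_int.mono_set Set.Ioc_subset_Ioi_self)
    have hsmaf : StronglyMeasurableAtFilter f (nhds d) :=
      ⟨Set.Ioi 0, Ioi_mem_nhds hd,
        ((hfcont.mono Set.Ioi_subset_Ici_self).aestronglyMeasurable measurableSet_Ioi)⟩
    have hca : ContinuousAt f d := hfcont.continuousAt (Ici_mem_nhds hd)
    have hG : HasDerivAt (fun u => S 0 - ∫ y in (0:ℝ)..u, f y) (-(f d)) d := by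
      have := intervalIntegral.integral_hasDerivAt_right hii hsmaf hca
      simpa using (this.const_sub (S 0))
    apply hG.congr_of_eventuallyEq
    filter_upwards [Ioi_mem_nhds hd] with u hu
    rw [htailS 0 u le_rfl (le_of_lt hu)]
  -- antitone exp(b d) * S d on [Y0, ∞)
  have hgderiv : ∀ d : ℝ, 0 < d →
      HasDerivAt (fun u => Real.exp (b * u) * S u) (Real.exp (b * d) * (b * S d - f d)) d := by
    intro d hd
    have h1 : HasDerivAt (fun u => Real.exp (b * u)) (b * Real.exp (b * d)) d := by
      simpa [mul_comm] using ((hasDerivAt_id d).const_mul b).exp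
    have : HasDerivAt (fun u => Real.exp (b * u) * S u) _ d := h1.mul (hSderiv d hd)
    convert this using 1
    ring
  have hanti : AntitoneOn (fun u => Real.exp (b * u) * S u) (Set.Ici Y0) := by
    apply antitoneOn_of_deriv_nonpos (convex_Ici Y0)
    · intro x hx
      have hx0 : 0 < x := lt_of_lt_of_le hY00 hx
      exact (hgderiv x hx0).continuousAt.continuousWithinAt
    · intro x hx
      rw [interior_Ici] at hx
      exact (hgderiv x (lt_trans hY00 hx)).differentiableAt.differentiableWithinAt
    · intro x hx
      rw [interior_Ici] at hx
      rw [(hgderiv x (lt_trans hY00 hx)).deriv]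
      have := hflb x hx.le
      nlinarith [Real.exp_pos (b * x)]
  set C : ℝ := Real.exp (b * Y0) * S Y0 with hC
  have hC0 : 0 < C := mul_pos (Real.exp_pos _) (hSy Y0 hY00.le)
  have hSbound : ∀ d ≥ Y0, S d ≤ C * Real.exp (-b * d) := by
    intro d hd
    have hh : Real.exp (b * d) * S d ≤ C := by
      simpa using hanti Set.self_mem_Ici hd hd
    calc S d = (Real.exp (b * d) * S d) * Real.exp (-b * d) := by
          rw [neg_mul, Real.exp_neg]
          field_simp
      _ ≤ C * Real.exp (-b * d) :=
          mul_le_mul_of_nonneg_right hh (Real.exp_pos _).le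
  -- integrability of E on Ioi Y0
  have hEbound : ∀ y ≥ Y0, E y ≤ ((ℓ + 1) * C) * Real.exp (-(b - a) * y) := by
    intro y hy
    have h1 : f y ≤ (ℓ + 1) * S y := (hfub y hy).le
    have h2 : S y ≤ C * Real.exp (-b * y) := hSbound y hy
    have h3 : (0:ℝ) < ℓ + 1 := by linarith
    calc E y = Real.exp (a * y) * f y := rfl
      _ ≤ Real.exp (a * y) * ((ℓ + 1) * (C * Real.exp (-b * y))) := by
          have := le_trans h1 (by nlinarith : (ℓ + 1) * S y ≤ (ℓ + 1) * (C * Real.exp (-b * y)))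
          exact mul_le_mul_of_nonneg_left this (Real.exp_pos _).le
      _ = ((ℓ + 1) * C) * (Real.exp (a * y) * Real.exp (-b * y)) := by ring
      _ = ((ℓ + 1) * C) * Real.exp (-(b - a) * y) := by
          rw [← Real.exp_add]; ring_nf
  have hba : 0 < b - a := sub_pos.mpr hab
  have hdom_int : IntegrableOn (fun y => ((ℓ + 1) * C) * Real.exp (-(b - a) * y))
      (Set.Ioi Y0) := (exp_neg_integrableOn_Ioi Y0 hba).const_mul _
  have hE_int : IntegrableOn E (Set.Ioi Y0) := by
    apply hdom_int.mono' (((hEcont.mono (fun x hx => le_trans hY00.le (le_of_lt hx))).mono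
      (fun x hx => hx)).aestronglyMeasurable measurableSet_Ioi)
    rw [ae_restrict_iff' measurableSet_Ioi]
    filter_upwards with y hy
    rw [Real.norm_eq_abs, abs_of_nonneg (hEnonneg y)]
    exact hEbound y hy.le
  -- tail representation of N
  have hEint_Ioi : ∀ d ≥ Y0, IntegrableOn E (Set.Ioi d) := fun d hd =>
    hE_int.mono_set (fun x hx => lt_of_le_of_lt hd hx)
  have htailN : ∀ d ≥ Y0, N d = N Y0 - ∫ y in Y0..d, E y := by
    intro d hd
    have hsplit : Set.Ioc Y0 d ∪ Set.Ioi d = Set.Ioi Y0 := Set.Ioc_union_Ioi_eq_Ioi hd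
    have hint1 : IntegrableOn E (Set.Ioc Y0 d) := hE_int.mono_set Set.Ioc_subset_Ioi_self
    have hint2 : IntegrableOn E (Set.Ioi d) := hEint_Ioi d hd
    have := MeasureTheory.setIntegral_union (Set.Ioc_disjoint_Ioi le_rfl)
      measurableSet_Ioi hint1 hint2
    rw [hsplit] at this
    simp only [hN]
    rw [intervalIntegral.integral_of_le hd, this]
    ring
  -- N tends to 0
  have hNzero : Tendsto N atTop (nhds 0) := by
    have h1 : Tendsto (fun d => ∫ y in Y0..d, E y) atTop (nhds (N Y0)) :=
      intervalIntegral_tendsto_integral_Ioi Y0 hE_int tendsto_id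
    have h2 : Tendsto (fun d => N Y0 - ∫ y in Y0..d, E y) atTop (nhds (N Y0 - N Y0)) :=
      tendsto_const_nhds.sub h1
    rw [sub_self] at h2
    apply h2.congr'
    filter_upwards [eventually_ge_atTop Y0] with d hd
    exact (htailN d hd).symm
  -- D tends to 0
  have hDzero : Tendsto (fun d => Real.exp (a * d) * S d) atTop (nhds 0) := by
    apply squeeze_zero'
    · filter_upwards [eventually_ge_atTop (0:ℝ)] with d hd
      exact mul_nonneg (Real.exp_pos _).le (hSy d hd).le
    · filter_upwards [eventually_ge_atTop Y0] with d hd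
      calc Real.exp (a * d) * S d ≤ Real.exp (a * d) * (C * Real.exp (-b * d)) :=
            mul_le_mul_of_nonneg_left (hSbound d hd) (Real.exp_pos _).le
        _ = C * Real.exp (-(b - a) * d) := by rw [mul_comm, mul_assoc, ← Real.exp_add]; ring_nf
    · have : Tendsto (fun d : ℝ => -(b - a) * d) atTop atBot :=
        tendsto_id.const_mul_atTop_of_neg (by linarith)
      simpa using (tendsto_exp_atBot.comp this).const_mul C
  -- derivative of N
  have hNderiv : ∀ d : ℝ, Y0 < d → HasDerivAt N (-(E d)) d := by
    intro d hd
    have hd0 : 0 < d := lt_trans hY00 hd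
    have hii : IntervalIntegrable E volume Y0 d :=
      (intervalIntegrable_iff_integrableOn_Ioc_of_le hd.le).mpr
        (hE_int.mono_set Set.Ioc_subset_Ioi_self)
    have hsmaf : StronglyMeasurableAtFilter E (nhds d) :=
      ⟨Set.Ioi 0, Ioi_mem_nhds hd0,
        ((hEcont.mono Set.Ioi_subset_Ici_self).aestronglyMeasurable measurableSet_Ioi)⟩
    have hca : ContinuousAt E d := hEcont.continuousAt (Ici_mem_nhds hd0)
    have hG : HasDerivAt (fun u => N Y0 - ∫ y in Y0..u, E y) (-(E d)) d := by
      have := intervalIntegral.integral_hasDerivAt_right hii hsmaf hca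
      simpa using (this.const_sub (N Y0))
    apply hG.congr_of_eventuallyEq
    filter_upwards [Ioi_mem_nhds hd] with u hu
    rw [htailN u (le_of_lt hu)]
  -- derivative of D
  have hDderiv : ∀ d : ℝ, 0 < d →
      HasDerivAt (fun u => Real.exp (a * u) * S u) (Real.exp (a * d) * (a * S d - f d)) d := by
    intro d hd
    have h1 : HasDerivAt (fun u => Real.exp (a * u)) (a * Real.exp (a * d)) d := by
      simpa [mul_comm] using ((hasDerivAt_id d).const_mul a).exp
    have : HasDerivAt (fun u => Real.exp (a * u) * S u) _ d := h1.mul (hSderiv d hd)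
    convert this using 1
    ring
  -- nonvanishing of D'
  have hD'ne : ∀ d : ℝ, Y0 ≤ d → Real.exp (a * d) * (a * S d - f d) ≠ 0 := by
    intro d hd
    have h1 : a * S d < b * S d := by
      have := hSy d (le_trans hY00.le hd)
      nlinarith
    have h2 : a * S d - f d < 0 := by linarith [hflb d hd]
    exact ne_of_lt (mul_neg_of_pos_of_neg (Real.exp_pos _) h2)
  -- the ratio of derivatives tends to ℓ/(ℓ-a)
  have hratio : Tendsto (fun d => (-(E d)) / (Real.exp (a * d) * (a * S d - f d)))
      atTop (nhds (ℓ / (ℓ - a))) := by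
    have hmain : Tendsto (fun d => (f d / S d) / (f d / S d - a)) atTop (nhds (ℓ / (ℓ - a))) := by
      apply Tendsto.div hhaz (hhaz.sub tendsto_const_nhds)
      exact sub_ne_zero.mpr (ne_of_gt haℓ)
    apply hmain.congr'
    filter_upwards [eventually_ge_atTop Y0] with d hd
    have hSd : 0 < S d := hSy d (le_trans hY00.le hd)
    have hfa : a * S d - f d < 0 := by
      have h1 : a * S d < b * S d := by nlinarith
      linarith [hflb d hd]
    have hexpd := Real.exp_pos (a * d)
    have hne1 : S d ≠ 0 := ne_of_gt hSd
    have hne2 : f d - a * S d ≠ 0 := by intro h; rw [sub_eq_zero] at h; linarith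
    have hdne : Real.exp (a * d) * (a * S d - f d) ≠ 0 := hD'ne d hd
    have e1 : f d / S d / (f d / S d - a) = f d / (f d - a * S d) := by
      rw [div_div]
      congr 1
      field_simp
    have e2 : -(E d) / (Real.exp (a * d) * (a * S d - f d)) = f d / (f d - a * S d) := by
      rw [div_eq_div_iff hdne hne2]
      simp only [hE]
      ring
    rw [e1]
    exact e2.symm
  -- apply L'Hôpital
  have := HasDerivAt.lhopital_zero_atTop
    (f' := fun d => -(E d)) (g' := fun d => Real.exp (a * d) * (a * S d - f d))
    (by filter_upwards [eventually_gt_atTop Y0] with d hd; exact hNderiv d hd)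
    (by filter_upwards [eventually_gt_atTop Y0] with d hd
        exact hDderiv d (lt_trans hY00 hd))
    (by filter_upwards [eventually_ge_atTop Y0] with d hd; exact hD'ne d hd)
    hNzero hDzero hratio
  exact this
end

section
/- Let Y be a nonnegative random variable with a continuous probability density function f on [0,∞) and survival function S(y) = P(Y > y) satisfying S(y) > 0 for all y ≥ 0. Suppose the hazard rate h(y) = f(y)/S(y) satisfies lim_{y→∞} h(y) = ℓ with ℓ > 0, and let a ∈ (0, ℓ) be such that E[e^{aY}] < ∞. Then sup_{d ≥ 0} E[e^{a(Y − d)} 1_{{Y > d}}] / S(d) < ∞. -/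
open MeasureTheory Real Filter Set
open scoped NNReal ENNReal


lemma tail_decay (g : ℝ → ℝ) (hg : Continuous g) (hgnn : ∀ y, 0 ≤ g y)
    (hgi : IntegrableOn g (Set.Ioi 0))
    (b M : ℝ) (hb : 0 < b) (hM : 0 ≤ M)
    (hlow : ∀ y, M ≤ y → b * (∫ t in Set.Ioi y, g t) ≤ g y) :
    ∀ d, M ≤ d → ∀ y, d ≤ y →
      (∫ t in Set.Ioi y, g t) ≤ (∫ t in Set.Ioi d, g t) * Real.exp (-(b*(y-d))) := by
  have hgiy : ∀ y : ℝ, 0 ≤ y → IntegrableOn g (Set.Ioi y) :=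
    fun y hy => hgi.mono_set (Ioi_subset_Ioi hy)
  set F : ℝ → ℝ := fun y => ∫ t in Set.Ioi y, g t with hF
  have hsplit : ∀ y, M ≤ y → F M = (∫ t in M..y, g t) + F y := by
    intro y hy
    rw [intervalIntegral.integral_of_le hy, hF]
    rw [← setIntegral_union (Ioc_disjoint_Ioi le_rfl) measurableSet_Ioi
      (hg.integrableOn_Ioc) (hgiy y (hM.trans hy)), Ioc_union_Ioi_eq_Ioi hy]
  set Φ : ℝ → ℝ := fun y => Real.exp (b*y) * (F M - ∫ t in M..y, g t) with hΦ
  have hFy : ∀ y, M ≤ y → F M - (∫ t in M..y, g t) = F y := by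
    intro y hy; rw [hsplit y hy]; ring
  have hderiv : ∀ y : ℝ, HasDerivAt Φ
      (Real.exp (b*y) * b * (F M - ∫ t in M..y, g t) + Real.exp (b*y) * (-(g y))) y := by
    intro y
    have h1 : HasDerivAt (fun x => Real.exp (b*x)) (Real.exp (b*y) * b) y := by
      have := (Real.hasDerivAt_exp (b*y)).comp y ((hasDerivAt_id y).const_mul b)
      exact this.congr_deriv (by ring)
    have h2 : HasDerivAt (fun x => F M - ∫ t in M..x, g t) (-(g y)) y := by
      exact (intervalIntegral.integral_hasDerivAt_right (hg.intervalIntegrable M y)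
        (hg.stronglyMeasurableAtFilter volume (nhds y)) hg.continuousAt).const_sub (F M)
    exact h1.mul h2
  have anti : AntitoneOn Φ (Set.Ici M) := by
    apply antitoneOn_of_deriv_nonpos (convex_Ici M)
    · exact (fun x _ => ((hderiv x).differentiableAt).continuousAt.continuousWithinAt)
    · exact fun x hx => ((hderiv x).differentiableAt).differentiableWithinAt
    · intro x hx
      rw [interior_Ici] at hx
      rw [(hderiv x).deriv]
      have hMx : M ≤ x := le_of_lt hx
      rw [hFy x hMx]
      have := hlow x hMx
      nlinarith [Real.exp_pos (b*x), hgnn x, this]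
  intro d hd y hy
  have h1 : Φ y ≤ Φ d := anti (mem_Ici.2 hd) (mem_Ici.2 (hd.trans hy)) hy
  rw [hΦ] at h1
  simp only at h1
  rw [hFy d hd, hFy y (hd.trans hy)] at h1
  have hepos : (0:ℝ) < Real.exp (b*y) := Real.exp_pos _
  rw [Real.exp_neg]
  have h3 : Real.exp (b*(y-d)) = Real.exp (b*y) / Real.exp (b*d) := by
    rw [← Real.exp_sub]; ring_nf
  have h2 : (∫ t in Set.Ioi d, g t) * (Real.exp (b*(y-d)))⁻¹
      = Real.exp (b*d) * F d / Real.exp (b*y) := by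
    rw [h3]; field_simp; rw [hF]
  rw [h2, le_div_iff₀ hepos]
  show F y * Real.exp (b*y) ≤ _
  nlinarith

lemma map_restrict_eq {Ω : Type*} [MeasurableSpace Ω] (μ : Measure Ω) [IsProbabilityMeasure μ]
    (Y : Ω → ℝ) (hYmeas : Measurable Y)
    (g : ℝ → ℝ) (hgm : Measurable g) (hgnn : ∀ y, 0 ≤ g y)
    (hgi : IntegrableOn g (Set.Ioi 0))
    (h : ∀ d : ℝ, 0 ≤ d → (μ {ω | d < Y ω}).toReal = ∫ y in Set.Ioi d, g y) :
    (Measure.map Y μ).restrict (Set.Ioi 0)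
      = (volume.withDensity (fun y => ENNReal.ofReal (g y))).restrict (Set.Ioi 0) := by
  set ν := Measure.map Y μ with hν
  set ρ := volume.withDensity (fun y => ENNReal.ofReal (g y)) with hρ
  have hνfin : IsProbabilityMeasure ν := Measure.isProbabilityMeasure_map hYmeas.aemeasurable
  have key : ∀ d : ℝ, 0 ≤ d → ν (Set.Ioi d) = ρ (Set.Ioi d) := by
    intro d hd
    have h1 : ν (Set.Ioi d) = μ {ω | d < Y ω} := by
      rw [hν, Measure.map_apply hYmeas measurableSet_Ioi]; rfl
    have h2 : ρ (Set.Ioi d) = ∫⁻ y in Set.Ioi d, ENNReal.ofReal (g y) := by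
      rw [hρ, withDensity_apply _ measurableSet_Ioi]
    have h3 : ENNReal.ofReal (∫ y in Set.Ioi d, g y) = ∫⁻ y in Set.Ioi d, ENNReal.ofReal (g y) := by
      apply ofReal_integral_eq_lintegral_ofReal (hgi.mono_set (Ioi_subset_Ioi hd))
      exact Filter.Eventually.of_forall (fun y => hgnn y)
    rw [h1, h2, ← h3, ← h d hd, ENNReal.ofReal_toReal (measure_ne_top μ _)]
  have hρIoi : ∀ d : ℝ, 0 ≤ d → ρ (Set.Ioi d) ≠ ⊤ := by
    intro d hd; rw [← key d hd]; exact measure_ne_top ν _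
  haveI : IsFiniteMeasure (ν.restrict (Set.Ioi 0)) := by
    constructor; rw [Measure.restrict_apply_univ]; exact (measure_lt_top ν _)
  apply Measure.ext_of_Iic
  intro x
  rw [Measure.restrict_apply measurableSet_Iic, Measure.restrict_apply measurableSet_Iic,
    Set.inter_comm, Set.Ioi_inter_Iic]
  rcases le_or_gt x 0 with hx | hx
  · rw [Set.Ioc_eq_empty (by simpa using hx.not_gt)]; simp
  · have hdiff : Set.Ioc 0 x = Set.Ioi 0 \ Set.Ioi x := by rw [Set.Ioi_diff_Ioi]
    rw [hdiff, measure_diff (Ioi_subset_Ioi hx.le) measurableSet_Ioi.nullMeasurableSet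
        (measure_ne_top ν _),
      measure_diff (Ioi_subset_Ioi hx.le) measurableSet_Ioi.nullMeasurableSet
        (hρIoi x hx.le),
      key 0 le_rfl, key x hx.le]

lemma int_exp_decay (k d : ℝ) (hk : 0 < k) :
    (∫ y in Set.Ioi d, Real.exp (-(k*(y-d)))) = k⁻¹ := by
  have hIOn : IntegrableOn (fun y => Real.exp (-(k*(y-d)))) (Set.Ioi d) := by
    have : (fun y => Real.exp (-(k*(y-d)))) = fun y => Real.exp (k*d) * Real.exp (-k*y) := by
      funext y; rw [← Real.exp_add]; ring_nf
    rw [this]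
    exact (exp_neg_integrableOn_Ioi d hk).const_mul _
  have hderiv : ∀ x ∈ Set.Ioi d, HasDerivAt (fun y => -k⁻¹ * Real.exp (-(k*(y-d))))
      (Real.exp (-(k*(x-d)))) x := by
    intro x _
    have h1 : HasDerivAt (fun y : ℝ => -(k*(y-d))) (-k) x := by
      exact (((hasDerivAt_id x).sub_const d).const_mul k).neg.congr_deriv (by ring)
    have h2 := (Real.hasDerivAt_exp (-(k*(x-d)))).comp x h1
    have h3 := h2.const_mul (-k⁻¹)
    exact h3.congr_deriv (by have := hk.ne'; field_simp)
  have hcont : ContinuousWithinAt (fun y => -k⁻¹ * Real.exp (-(k*(y-d)))) (Set.Ici d) d :=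
    (Continuous.continuousWithinAt (by continuity))
  have hlim : Filter.Tendsto (fun y => -k⁻¹ * Real.exp (-(k*(y-d)))) Filter.atTop (nhds 0) := by
    have h0 : Filter.Tendsto (fun y : ℝ => y - d) Filter.atTop Filter.atTop := by
      simpa [sub_eq_add_neg] using tendsto_atTop_add_const_right Filter.atTop (-d) tendsto_id
    have h1 : Filter.Tendsto (fun y : ℝ => -(k*(y-d))) Filter.atTop Filter.atBot :=
      (tendsto_neg_atBot_iff.2 (h0.const_mul_atTop hk))
    have h2 : Filter.Tendsto (fun y : ℝ => Real.exp (-(k*(y-d)))) Filter.atTop (nhds 0) :=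
      Real.tendsto_exp_atBot.comp h1
    have h3 := h2.const_mul (-k⁻¹)
    simpa using h3
  have := integral_Ioi_of_hasDerivAt_of_tendsto hcont hderiv hIOn hlim
  rw [this]
  simp

lemma exp_decay_integrableOn (k d : ℝ) (hk : 0 < k) :
    IntegrableOn (fun y => Real.exp (-(k*(y-d)))) (Set.Ioi d) := by
  have : (fun y => Real.exp (-(k*(y-d)))) = fun y => Real.exp (k*d) * Real.exp (-k*y) := by
    funext y; rw [← Real.exp_add]; ring_nf
  rw [this]
  exact (exp_neg_integrableOn_Ioi d hk).const_mul _

/-- Proposition 4.4 (case `ℓ > 0`): if `Y ≥ 0` has a continuous density `f` on `[0,∞)` with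
everywhere positive survival function `S`, the hazard rate `h(y) = f(y)/S(y)` tends to
`ℓ > 0` at infinity, and `0 < a < ℓ` with `E[e^{aY}] < ∞`, then
`sup_{d ≥ 0} E[e^{a(Y−d)} 1_{Y>d}]/S(d) < ∞`. -/
theorem hazard_rate_conditional_exp_moment_bdd
    {Ω : Type*} [MeasurableSpace Ω] (μ : Measure Ω) [IsProbabilityMeasure μ]
    (Y : Ω → ℝ) (hYmeas : Measurable Y) (hYnonneg : ∀ ω, 0 ≤ Y ω)
    (f : ℝ → ℝ) (hfcont : ContinuousOn f (Set.Ici 0)) (hfnonneg : ∀ y, 0 ≤ f y)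
    (hdens : ∀ d : ℝ, 0 ≤ d →
      (μ {ω | d < Y ω}).toReal = ∫ y in Set.Ioi d, f y)
    (hSpos : ∀ d : ℝ, 0 ≤ d → 0 < (μ {ω | d < Y ω}).toReal)
    (ℓ : ℝ) (hℓ : 0 < ℓ)
    (hhaz : Filter.Tendsto (fun y : ℝ => f y / (μ {ω | y < Y ω}).toReal)
        Filter.atTop (nhds ℓ))
    (a : ℝ) (ha0 : 0 < a) (haℓ : a < ℓ)
    (hexp : Integrable (fun ω => Real.exp (a * Y ω)) μ) :
    BddAbove ((fun d : ℝ =>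
        (∫ ω in {ω | d < Y ω}, Real.exp (a * (Y ω - d)) ∂μ)
          / (μ {ω | d < Y ω}).toReal) '' Set.Ici 0) := by
  classical
  set g : ℝ → ℝ := fun y => f (max y 0) with hgdef
  have hgcont : Continuous g :=
    hfcont.comp_continuous (continuous_id.max continuous_const) (fun x => le_max_right x 0)
  have hgnn : ∀ y, 0 ≤ g y := fun y => hfnonneg _
  have hgeq : ∀ d : ℝ, 0 ≤ d → (∫ y in Set.Ioi d, f y) = ∫ y in Set.Ioi d, g y := by
    intro d hd
    apply setIntegral_congr_fun measurableSet_Ioi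
    intro y hy
    simp only [hgdef]
    rw [max_eq_left (le_of_lt (lt_of_le_of_lt hd hy))]
  have hdens' : ∀ d : ℝ, 0 ≤ d → (μ {ω | d < Y ω}).toReal = ∫ y in Set.Ioi d, g y :=
    fun d hd => (hdens d hd).trans (hgeq d hd)
  have hgi : IntegrableOn g (Set.Ioi 0) := by
    by_contra hcon
    have h0 := hdens' 0 le_rfl
    rw [integral_undef hcon] at h0
    exact absurd h0 (ne_of_gt (hSpos 0 le_rfl))
  have hmeasset : ∀ d : ℝ, MeasurableSet {ω | d < Y ω} := fun d => hYmeas measurableSet_Ioi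
  have hSmono : ∀ d e : ℝ, d ≤ e →
      (μ {ω | e < Y ω}).toReal ≤ (μ {ω | d < Y ω}).toReal := by
    intro d e hde
    apply ENNReal.toReal_mono (measure_ne_top μ _)
    exact measure_mono (fun ω hω => lt_of_le_of_lt hde hω)
  have key := map_restrict_eq μ Y hYmeas g hgcont.measurable hgnn hgi hdens'
  set ν := Measure.map Y μ with hν
  have hexpameas : Continuous (fun y : ℝ => Real.exp (a*y)) :=
    Real.continuous_exp.comp (continuous_const.mul continuous_id)
  have hgexp : Integrable (fun y => Real.exp (a*y)) ν := by
    rw [hν, integrable_map_measure hexpameas.aestronglyMeasurable hYmeas.aemeasurable]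
    exact hexp
  have hgtoNN : Measurable (fun y => (g y).toNNReal) := hgcont.measurable.real_toNNReal
  have hofReal : (fun y => ENNReal.ofReal (g y))
      = (fun y => (((g y).toNNReal : ℝ≥0) : ℝ≥0∞)) := rfl
  have hrestr : ∀ d : ℝ, 0 ≤ d → ν.restrict (Set.Ioi d)
      = (volume.restrict (Set.Ioi d)).withDensity (fun y => ENNReal.ofReal (g y)) := by
    intro d hd
    have h1 : Set.Ioi d ∩ Set.Ioi (0:ℝ) = Set.Ioi d := by
      rw [Set.Ioi_inter_Ioi, max_eq_left hd]
    calc ν.restrict (Set.Ioi d) = ν.restrict (Set.Ioi d ∩ Set.Ioi 0) := by rw [h1]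
      _ = (ν.restrict (Set.Ioi 0)).restrict (Set.Ioi d) :=
          (Measure.restrict_restrict measurableSet_Ioi).symm
      _ = ((volume.withDensity (fun y => ENNReal.ofReal (g y))).restrict (Set.Ioi 0)).restrict
            (Set.Ioi d) := by rw [key]
      _ = (volume.withDensity (fun y => ENNReal.ofReal (g y))).restrict (Set.Ioi d ∩ Set.Ioi 0) :=
          Measure.restrict_restrict measurableSet_Ioi
      _ = (volume.withDensity (fun y => ENNReal.ofReal (g y))).restrict (Set.Ioi d) := by rw [h1]
      _ = (volume.restrict (Set.Ioi d)).withDensity (fun y => ENNReal.ofReal (g y)) :=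
          restrict_withDensity measurableSet_Ioi _
  have hnum : ∀ d : ℝ, 0 ≤ d →
      (∫ ω in {ω | d < Y ω}, Real.exp (a * Y ω) ∂μ)
        = ∫ y in Set.Ioi d, g y * Real.exp (a * y) := by
    intro d hd
    have h1 : (∫ y in Set.Ioi d, Real.exp (a*y) ∂ν)
        = ∫ ω in Y ⁻¹' (Set.Ioi d), Real.exp (a * Y ω) ∂μ :=
      setIntegral_map measurableSet_Ioi hexpameas.aestronglyMeasurable hYmeas.aemeasurable
    have h2 : Y ⁻¹' (Set.Ioi d) = {ω | d < Y ω} := rfl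
    rw [h2] at h1
    rw [← h1]
    show (∫ y, Real.exp (a*y) ∂(ν.restrict (Set.Ioi d))) = _
    rw [hrestr d hd, hofReal, integral_withDensity_eq_integral_smul hgtoNN]
    apply setIntegral_congr_fun measurableSet_Ioi
    intro y _
    simp [NNReal.smul_def, Real.coe_toNNReal _ (hgnn y)]
  have hintg : ∀ d : ℝ, 0 ≤ d → IntegrableOn (fun y => g y * Real.exp (a*y)) (Set.Ioi d) := by
    intro d hd
    have h0 : Integrable (fun y => Real.exp (a*y)) (ν.restrict (Set.Ioi d)) := hgexp.restrict
    rw [hrestr d hd, hofReal, integrable_withDensity_iff_integrable_smul hgtoNN] at h0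
    apply h0.congr
    apply Filter.Eventually.of_forall
    intro y
    simp [NNReal.smul_def, Real.coe_toNNReal _ (hgnn y)]
  have hNid : ∀ d : ℝ, 0 ≤ d →
      (∫ ω in {ω | d < Y ω}, Real.exp (a * (Y ω - d)) ∂μ)
        = ∫ y in Set.Ioi d, g y * Real.exp (a * (y - d)) := by
    intro d hd
    have e1 : (∫ ω in {ω | d < Y ω}, Real.exp (a * (Y ω - d)) ∂μ)
        = Real.exp (-(a*d)) * ∫ ω in {ω | d < Y ω}, Real.exp (a * Y ω) ∂μ := by
      rw [← integral_const_mul]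
      apply setIntegral_congr_fun (hmeasset d)
      intro ω _
      show Real.exp (a * (Y ω - d)) = Real.exp (-(a*d)) * Real.exp (a * Y ω)
      rw [← Real.exp_add]; ring_nf
    have e2 : (∫ y in Set.Ioi d, g y * Real.exp (a * (y - d)))
        = Real.exp (-(a*d)) * ∫ y in Set.Ioi d, g y * Real.exp (a * y) := by
      rw [← integral_const_mul]
      apply setIntegral_congr_fun measurableSet_Ioi
      intro y _
      show g y * Real.exp (a * (y - d)) = Real.exp (-(a*d)) * (g y * Real.exp (a * y))
      have : Real.exp (a * (y - d)) = Real.exp (-(a*d)) * Real.exp (a*y) := by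
        rw [← Real.exp_add]; ring_nf
      rw [this]; ring
    rw [e1, e2, hnum d hd]
  have hIntShift : ∀ d : ℝ, 0 ≤ d →
      IntegrableOn (fun y => g y * Real.exp (a * (y - d))) (Set.Ioi d) := by
    intro d hd
    have : (fun y => g y * Real.exp (a * (y - d)))
        = fun y => Real.exp (-(a*d)) * (g y * Real.exp (a*y)) := by
      funext y
      have : Real.exp (a * (y - d)) = Real.exp (-(a*d)) * Real.exp (a*y) := by
        rw [← Real.exp_add]; ring_nf
      rw [this]; ring
    rw [this]
    exact (hintg d hd).const_mul _
  -- choose constants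
  set b := (a+ℓ)/2 with hbdef
  have hab : a < b := by rw [hbdef]; linarith
  have hbl : b < ℓ := by rw [hbdef]; linarith
  have hb0 : 0 < b := lt_trans ha0 hab
  set c := ℓ + 1 with hcdef
  have hlc : ℓ < c := by rw [hcdef]; linarith
  have hc0 : 0 < c := lt_trans hℓ hlc
  have hev : ∀ᶠ y in Filter.atTop,
      f y / (μ {ω | y < Y ω}).toReal ∈ Set.Ioo b c := hhaz (Ioo_mem_nhds hbl hlc)
  obtain ⟨M₀, hM₀⟩ := Filter.eventually_atTop.1 hev
  set M := max M₀ 0 with hMdef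
  have hM0 : (0:ℝ) ≤ M := le_max_right _ _
  have hFS : ∀ y : ℝ, 0 ≤ y →
      (∫ t in Set.Ioi y, g t) = (μ {ω | y < Y ω}).toReal := fun y hy => (hdens' y hy).symm
  have hgf : ∀ y : ℝ, 0 ≤ y → g y = f y := by
    intro y hy; simp only [hgdef]; rw [max_eq_left hy]
  have hlow : ∀ y, M ≤ y → b * (∫ t in Set.Ioi y, g t) ≤ g y := by
    intro y hy
    have hy0 : (0:ℝ) ≤ y := le_trans hM0 hy
    have h1 := (hM₀ y (le_trans (le_max_left _ _) hy)).1
    have hS := hSpos y hy0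
    rw [hFS y hy0, hgf y hy0]
    exact le_of_lt ((lt_div_iff₀ hS).1 h1)
  have hupp : ∀ y, M ≤ y → g y ≤ c * (∫ t in Set.Ioi y, g t) := by
    intro y hy
    have hy0 : (0:ℝ) ≤ y := le_trans hM0 hy
    have h1 := (hM₀ y (le_trans (le_max_left _ _) hy)).2
    have hS := hSpos y hy0
    rw [hFS y hy0, hgf y hy0]
    exact le_of_lt ((div_lt_iff₀ hS).1 h1)
  have htail := tail_decay g hgcont hgnn hgi b M hb0 hM0 hlow
  set E := ∫ ω, Real.exp (a * Y ω) ∂μ with hEdef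
  have hE0 : 0 ≤ E := integral_nonneg (fun ω => (Real.exp_pos _).le)
  refine ⟨max (E / (μ {ω | M < Y ω}).toReal) (c * (b - a)⁻¹), ?_⟩
  rintro x ⟨d, hd, rfl⟩
  simp only
  have hd0 : (0:ℝ) ≤ d := hd
  have hSd := hSpos d hd0
  have hnn : (0:ℝ) ≤ ∫ ω in {ω | d < Y ω}, Real.exp (a * (Y ω - d)) ∂μ :=
    setIntegral_nonneg (hmeasset d) (fun ω _ => (Real.exp_pos _).le)
  rcases le_total d M with hdM | hMd
  · -- small d: bound by E / S M
    have hIf : IntegrableOn (fun ω => Real.exp (a * (Y ω - d))) {ω | d < Y ω} μ := by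
      have hfun : (fun ω => Real.exp (a * (Y ω - d)))
          = fun ω => Real.exp (-(a*d)) * Real.exp (a * Y ω) := by
        funext ω; rw [← Real.exp_add]; ring_nf
      rw [hfun]
      exact (hexp.const_mul _).restrict
    have h1 : (∫ ω in {ω | d < Y ω}, Real.exp (a * (Y ω - d)) ∂μ)
        ≤ ∫ ω in {ω | d < Y ω}, Real.exp (a * Y ω) ∂μ := by
      apply setIntegral_mono_on hIf hexp.restrict (hmeasset d)
      intro ω _
      apply Real.exp_le_exp.2
      have := hYnonneg ω
      nlinarith
    have h2 : (∫ ω in {ω | d < Y ω}, Real.exp (a * Y ω) ∂μ) ≤ E :=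
      setIntegral_le_integral hexp (Filter.Eventually.of_forall fun ω => (Real.exp_pos _).le)
    have h3 : (μ {ω | M < Y ω}).toReal ≤ (μ {ω | d < Y ω}).toReal := hSmono d M hdM
    have h4 : 0 < (μ {ω | M < Y ω}).toReal := hSpos M hM0
    refine le_trans ?_ (le_max_left _ _)
    exact div_le_div₀ hE0 (h1.trans h2) h4 h3
  · -- large d: bound by c / (b - a)
    have hba : (0:ℝ) < b - a := by linarith
    have hFd : (∫ t in Set.Ioi d, g t) = (μ {ω | d < Y ω}).toReal := hFS d hd0
    have hFd0 : (0:ℝ) ≤ ∫ t in Set.Ioi d, g t := by rw [hFd]; exact hSd.le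
    have hbound : ∀ y ∈ Set.Ioi d, g y * Real.exp (a*(y-d))
        ≤ (c * (∫ t in Set.Ioi d, g t)) * Real.exp (-((b-a)*(y-d))) := by
      intro y hy
      have hdy : d ≤ y := le_of_lt hy
      have h1 : g y ≤ c * (∫ t in Set.Ioi y, g t) := hupp y (le_trans hMd hdy)
      have h2 : (∫ t in Set.Ioi y, g t)
          ≤ (∫ t in Set.Ioi d, g t) * Real.exp (-(b*(y-d))) := htail d hMd y hdy
      have hexppos : (0:ℝ) < Real.exp (a*(y-d)) := Real.exp_pos _
      have step : g y * Real.exp (a*(y-d))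
          ≤ (c * ((∫ t in Set.Ioi d, g t) * Real.exp (-(b*(y-d))))) * Real.exp (a*(y-d)) := by
        apply mul_le_mul_of_nonneg_right _ hexppos.le
        calc g y ≤ c * (∫ t in Set.Ioi y, g t) := h1
          _ ≤ c * ((∫ t in Set.Ioi d, g t) * Real.exp (-(b*(y-d)))) :=
            mul_le_mul_of_nonneg_left h2 hc0.le
      refine step.trans (le_of_eq ?_)
      rw [mul_assoc, mul_assoc, mul_comm (Real.exp (-(b*(y-d)))), ← Real.exp_add]
      ring_nf
    have hRHSint : IntegrableOn
        (fun y => (c * (∫ t in Set.Ioi d, g t)) * Real.exp (-((b-a)*(y-d)))) (Set.Ioi d) :=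
      (exp_decay_integrableOn (b-a) d hba).const_mul _
    have hIle : (∫ y in Set.Ioi d, g y * Real.exp (a*(y-d)))
        ≤ (c * (∫ t in Set.Ioi d, g t)) * (b-a)⁻¹ := by
      have hm := setIntegral_mono_on (hIntShift d hd0) hRHSint measurableSet_Ioi hbound
      rw [integral_const_mul, int_exp_decay (b-a) d hba] at hm
      exact hm
    rw [hNid d hd0]
    refine le_trans ?_ (le_max_right _ _)
    rw [div_le_iff₀ hSd]
    calc (∫ y in Set.Ioi d, g y * Real.exp (a*(y-d)))
        ≤ (c * (∫ t in Set.Ioi d, g t)) * (b-a)⁻¹ := hIle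
      _ = c * (b-a)⁻¹ * (μ {ω | d < Y ω}).toReal := by rw [hFd]; ring
end

section
/- Let ρ > c > 0 and b > 0. Then for all m ≥ 0: 0 ≤ (1 − e^{−ρm})^b − (1 − e^{−(ρ−c)m})^b ≤ 1 − (1 − c/ρ)^b ≤ max(b, 1) · c/ρ. -/
open Real Set

/-- Bound on the difference of boundary factors: for `ρ > c > 0` and `b > 0`, for all `m ≥ 0`,
`0 ≤ (1 − e^{−ρm})^b − (1 − e^{−(ρ−c)m})^b ≤ 1 − (1 − c/ρ)^b ≤ max(b,1) · c/ρ`.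
(Real exponents are `Real.rpow`.) -/
theorem boundary_factor_difference_bound
    (ρ c b : ℝ) (hc : 0 < c) (hcρ : c < ρ) (hb : 0 < b) :
    ∀ m : ℝ, 0 ≤ m →
      0 ≤ (1 - Real.exp (-ρ * m)) ^ b - (1 - Real.exp (-(ρ - c) * m)) ^ b ∧
      (1 - Real.exp (-ρ * m)) ^ b - (1 - Real.exp (-(ρ - c) * m)) ^ b
        ≤ 1 - (1 - c / ρ) ^ b ∧
      1 - (1 - c / ρ) ^ b ≤ max b 1 * (c / ρ) := by
  intro m hm
  have hρ : (0:ℝ) < ρ := hc.trans hcρ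
  set x : ℝ := 1 - Real.exp (-ρ * m) with hxdef
  set y : ℝ := 1 - Real.exp (-(ρ - c) * m) with hydef
  have hx0 : 0 ≤ x := by
    have : Real.exp (-ρ * m) ≤ 1 := by
      rw [Real.exp_le_one_iff]
      nlinarith
    linarith
  have hy0 : 0 ≤ y := by
    have : Real.exp (-(ρ - c) * m) ≤ 1 := by
      rw [Real.exp_le_one_iff]
      nlinarith
    linarith
  have hx1 : x ≤ 1 := by
    have := Real.exp_pos (-ρ * m); simp only [hxdef]; linarith
  have hyx : y ≤ x := by
    have : Real.exp (-ρ * m) ≤ Real.exp (-(ρ - c) * m) := by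
      apply Real.exp_le_exp.2; nlinarith
    simp only [hxdef, hydef]; linarith
  have hq0 : (0:ℝ) ≤ 1 - c / ρ := by
    have : c / ρ ≤ 1 := (div_le_one hρ).2 hcρ.le
    linarith
  have hq1 : 1 - c / ρ ≤ 1 := by
    have : 0 < c / ρ := by positivity
    linarith
  -- key: y ≥ (1 - c/ρ) * x
  have hkey : (1 - c / ρ) * x ≤ y := by
    have ht0 : (0:ℝ) ≤ (ρ - c) / ρ := div_nonneg (by linarith) hρ.le
    have ht1 : (ρ - c) / ρ ≤ 1 := by
      rw [div_le_one hρ]; linarith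
    have hv1 : -1 ≤ Real.exp (-ρ * m) - 1 := by
      have := (Real.exp_pos (-ρ * m)); linarith
    have hbern := rpow_one_add_le_one_add_mul_self hv1 ht0 ht1
    have hpow : Real.exp (-(ρ - c) * m) = (Real.exp (-ρ * m)) ^ ((ρ - c) / ρ) := by
      rw [← Real.exp_log (Real.exp_pos (-ρ * m)), Real.log_exp,
        ← Real.exp_mul]
      congr 1
      field_simp
    rw [add_sub_cancel] at hbern
    have : 1 - (1 + (ρ - c) / ρ * (Real.exp (-ρ * m) - 1)) ≤ y := by
      simp only [hydef, hpow]; linarith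
    have heq : (ρ - c) / ρ = 1 - c / ρ := by field_simp
    calc (1 - c / ρ) * x = 1 - (1 + (ρ - c) / ρ * (Real.exp (-ρ * m) - 1)) := by
          rw [heq]; simp only [hxdef]; ring
      _ ≤ y := this
  constructor
  · have := Real.rpow_le_rpow hy0 hyx hb.le
    linarith
  constructor
  · have h1 : ((1 - c / ρ) * x) ^ b ≤ y ^ b :=
      Real.rpow_le_rpow (by positivity) hkey hb.le
    have h2 : ((1 - c / ρ) * x) ^ b = (1 - c / ρ) ^ b * x ^ b :=
      Real.mul_rpow hq0 hx0
    have hxb1 : x ^ b ≤ 1 := Real.rpow_le_one hx0 hx1 hb.le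
    have hqb1 : (1 - c / ρ) ^ b ≤ 1 := Real.rpow_le_one hq0 hq1 hb.le
    have hqb0 : 0 ≤ (1 - c / ρ) ^ b := Real.rpow_nonneg hq0 b
    nlinarith
  · rcases le_total 1 b with h | h
    · rw [max_eq_left h]
      have hbern := one_add_mul_self_le_rpow_one_add (s := -(c / ρ))
        (by linarith) h
      have heq : (1:ℝ) + -(c / ρ) = 1 - c / ρ := by ring
      rw [heq] at hbern
      linarith
    · rw [max_eq_right h]
      have : (1 - c / ρ) ^ (1:ℝ) ≤ (1 - c / ρ) ^ b := by
        apply Real.rpow_le_rpow_of_exponent_ge _ hq1 h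
        · have : c / ρ < 1 := (div_lt_one hρ).2 hcρ
          linarith
      rw [Real.rpow_one] at this
      linarith
end
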